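/- arXiv:1011.5358 — 6 statements merged into one kernel-verified Lean document; each statement's English description precedes it below -/
import Mathlib

section
/- For m ≥ 2 even and t ≥ 1, the expected Coxeter length of a product of t independent uniformly random reflections in the dihedral group I_2(m) equals m/2. -/
open Classical DihedralGroup

/-- Minimal length of a word over `S` whose product is `w`. -/
noncomputable def wordLength {G : Type*} [Group G] (S : Set G) (w : G) : ℕ :=
  sInf {k | ∃ l : List G, l.length = k ∧ (∀ x ∈ l, x ∈ S) ∧ l.prod = w}

/-- The two Coxeter generators (simple reflections) of the dihedral group `I₂(m)`. -/
def dihedralGens (m : ℕ) : Set (DihedralGroup m) :=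
  {DihedralGroup.sr 0, DihedralGroup.sr 1}

/-- Coxeter length in the dihedral group `I₂(m)`. -/
noncomputable def dLen (m : ℕ) (w : DihedralGroup m) : ℕ :=
  wordLength (dihedralGens m) w

/-- The set of reflections (conjugates of the generators) in `I₂(m)`. -/
def dihedralRefl (m : ℕ) : Set (DihedralGroup m) :=
  {w | ∃ g s, s ∈ dihedralGens m ∧ w = g * s * g⁻¹}

/-- Expected Coxeter length of a product of `t` independent uniformly random
reflections in `I₂(m)`. -/
noncomputable def dihedralExpLen (m t : ℕ) [NeZero m] : ℝ :=
  (∑ f ∈ Finset.univ.filter (fun f : Fin t → DihedralGroup m => ∀ i, f i ∈ dihedralRefl m),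
      (dLen m (List.ofFn f).prod : ℝ)) /
    ((Finset.univ.filter (fun w : DihedralGroup m => w ∈ dihedralRefl m)).card : ℝ) ^ t

noncomputable def phi (m : ℕ) : DihedralGroup m → ℕ
  | .r k => 2 * min k.val (m - k.val)
  | .sr k => if k.val = 0 then 1 else min (2 * k.val - 1) (2 * (m - k.val) + 1)

variable {m : ℕ} [NeZero m]

lemma val_lt (k : ZMod m) : k.val < m := ZMod.val_lt k

omit [NeZero m] in
lemma phi_one : phi m 1 = 0 := by
  show phi m (.r 0) = 0
  simp [phi]

lemma val_one_add (hm : 2 ≤ m) (k : ZMod m) :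
    ((1 : ZMod m) + k).val = if k.val + 1 = m then 0 else k.val + 1 := by
  haveI : Fact (1 < m) := ⟨hm⟩
  rw [ZMod.val_add, ZMod.val_one]
  rcases eq_or_ne (k.val + 1) m with h | h
  · simp [← h, Nat.add_comm 1 k.val, Nat.mod_self]
  · rw [if_neg h, Nat.add_comm 1 k.val, Nat.mod_eq_of_lt (by have := ZMod.val_lt k; omega)]

lemma val_sub_one (hm : 2 ≤ m) (k : ZMod m) :
    (k - 1).val = if k.val = 0 then m - 1 else k.val - 1 := by
  haveI : Fact (1 < m) := ⟨hm⟩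
  have h1 : (k - 1 : ZMod m) = k + ((m - 1 : ℕ) : ZMod m) := by
    have : ((m : ℕ) : ZMod m) = 0 := ZMod.natCast_self m
    push_cast [Nat.cast_sub (by omega : 1 ≤ m)]
    rw [this]; ring
  rw [h1, ZMod.val_add, ZMod.val_cast_of_lt (by omega)]
  have hk := ZMod.val_lt k
  rcases eq_or_ne k.val 0 with h | h
  · rw [if_pos h, h]; rw [Nat.zero_add, Nat.mod_eq_of_lt (by omega)]
  · rw [if_neg h]
    have : k.val + (m - 1) = (k.val - 1) + m := by omega
    rw [this, Nat.add_mod_right, Nat.mod_eq_of_lt (by omega)]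

lemma phi_mul_le (hm : 2 ≤ m) (s : DihedralGroup m) (hs : s ∈ dihedralGens m)
    (x : DihedralGroup m) : phi m (s * x) ≤ phi m x + 1 := by
  haveI : Fact (1 < m) := ⟨hm⟩
  have h0 : (0 : ZMod m).val = 0 := ZMod.val_zero
  rcases hs with h | h <;> subst h <;> rcases x with j | j
  · -- sr 0 * r j = sr (0 + j)
    show phi m (.sr (0 + j)) ≤ _
    rw [zero_add]
    have := ZMod.val_lt j
    simp only [phi]; split_ifs <;> omega
  · -- sr 0 * sr j = r (j - 0)
    show phi m (.r (j - 0)) ≤ _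
    rw [sub_zero]
    have := ZMod.val_lt j
    simp only [phi]; split_ifs <;> omega
  · -- sr 1 * r j = sr (1 + j)
    show phi m (.sr (1 + j)) ≤ _
    have hv := val_one_add hm j
    have := ZMod.val_lt j
    simp only [phi, hv]; split_ifs <;> omega
  · -- sr 1 * sr j = r (j - 1)
    show phi m (.r (j - 1)) ≤ _
    have hv := val_sub_one hm j
    have := ZMod.val_lt j
    simp only [phi, hv]; split_ifs <;> omega

lemma phi_list_le (hm : 2 ≤ m) (l : List (DihedralGroup m))
    (hl : ∀ x ∈ l, x ∈ dihedralGens m) : phi m l.prod ≤ l.length := by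
  induction l with
  | nil => simpa using phi_one.le
  | cons a l ih =>
      rw [List.prod_cons, List.length_cons]
      calc phi m (a * l.prod) ≤ phi m l.prod + 1 :=
            phi_mul_le hm a (hl a (by simp)) l.prod
        _ ≤ l.length + 1 := by
            have := ih (fun x hx => hl x (List.mem_cons_of_mem a hx)); omega

/-- word for `r j` of length `2*j` -/
def wA (m j : ℕ) : List (DihedralGroup m) :=
  (List.replicate j [DihedralGroup.sr 0, DihedralGroup.sr 1]).flatten

/-- word for `r (-j)` of length `2*j` -/
def wB (m j : ℕ) : List (DihedralGroup m) :=
  (List.replicate j [DihedralGroup.sr 1, DihedralGroup.sr 0]).flatten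

omit [NeZero m] in
lemma wA_mem (j : ℕ) : ∀ x ∈ wA m j, x ∈ dihedralGens m := by
  intro x hx
  simp only [wA, List.mem_flatten, List.mem_replicate] at hx
  obtain ⟨l, ⟨-, rfl⟩, hx⟩ := hx
  simpa [dihedralGens] using hx

omit [NeZero m] in
lemma wB_mem (j : ℕ) : ∀ x ∈ wB m j, x ∈ dihedralGens m := by
  intro x hx
  simp only [wB, List.mem_flatten, List.mem_replicate] at hx
  obtain ⟨l, ⟨-, rfl⟩, hx⟩ := hx
  simp only [dihedralGens, Set.mem_insert_iff, Set.mem_singleton_iff]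
  simp at hx; tauto

omit [NeZero m] in
lemma wA_length (j : ℕ) : (wA m j).length = 2 * j := by
  simp [wA, Nat.mul_comm]

omit [NeZero m] in
lemma wB_length (j : ℕ) : (wB m j).length = 2 * j := by
  simp [wB, Nat.mul_comm]

omit [NeZero m] in
lemma wA_prod (j : ℕ) : (wA m j).prod = .r (j : ZMod m) := by
  simp only [wA, List.prod_flatten, List.map_replicate, List.prod_replicate]
  have : ([DihedralGroup.sr 0, DihedralGroup.sr 1] : List (DihedralGroup m)).prod
       = .r 1 := by simp
  rw [this, r_one_pow]

omit [NeZero m] in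
lemma wB_prod (j : ℕ) : (wB m j).prod = .r (-(j : ZMod m)) := by
  simp only [wB, List.prod_flatten, List.map_replicate, List.prod_replicate]
  have h1 : ([DihedralGroup.sr 1, DihedralGroup.sr 0] : List (DihedralGroup m)).prod
       = .r (-1) := by simp
  have h2 : (DihedralGroup.r (-1) : DihedralGroup m) = (.r 1)⁻¹ := by
    rw [eq_inv_iff_mul_eq_one, r_mul_r, one_def]; simp
  rw [h1, h2, inv_pow, r_one_pow]
  rfl

omit [NeZero m] in
lemma dLen_le (w : DihedralGroup m) (l : List (DihedralGroup m))
    (hmem : ∀ x ∈ l, x ∈ dihedralGens m) (hprod : l.prod = w) :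
    dLen m w ≤ l.length :=
  Nat.sInf_le ⟨l, rfl, hmem, hprod⟩

lemma phi_le_dLen (hm : 2 ≤ m) (w : DihedralGroup m)
    (hne : {k | ∃ l : List (DihedralGroup m),
      l.length = k ∧ (∀ x ∈ l, x ∈ dihedralGens m) ∧ l.prod = w}.Nonempty) :
    phi m w ≤ dLen m w := by
  refine le_csInf hne ?_
  rintro k ⟨l, rfl, hmem, rfl⟩
  exact phi_list_le hm l hmem

lemma dLen_r (hm : 2 ≤ m) (k : ZMod m) :
    dLen m (.r k) = 2 * min k.val (m - k.val) := by
  have hv := ZMod.val_lt k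
  have hA : dLen m (.r k) ≤ 2 * k.val := by
    have := dLen_le (.r k) (wA m k.val) (wA_mem _) (by rw [wA_prod, ZMod.natCast_zmod_val])
    rwa [wA_length] at this
  have hB : dLen m (.r k) ≤ 2 * (m - k.val) := by
    have hc : ((m - k.val : ℕ) : ZMod m) = -k := by
      push_cast [Nat.cast_sub hv.le]
      simp [ZMod.natCast_self, ZMod.natCast_zmod_val]
    have := dLen_le (.r k) (wB m (m - k.val)) (wB_mem _) (by rw [wB_prod, hc, neg_neg])
    rwa [wB_length] at this
  refine le_antisymm (by omega) ?_
  have := phi_le_dLen hm (.r k) ⟨2 * k.val, wA m k.val, wA_length _,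
    wA_mem _, by rw [wA_prod, ZMod.natCast_zmod_val]⟩
  simpa [phi] using this

lemma dLen_sr (hm : 2 ≤ m) (k : ZMod m) :
    dLen m (.sr k) =
      if k.val = 0 then 1 else min (2 * k.val - 1) (2 * (m - k.val) + 1) := by
  have hv := ZMod.val_lt k
  have hub : dLen m (.sr k) ≤
      if k.val = 0 then 1 else min (2 * k.val - 1) (2 * (m - k.val) + 1) := by
    rcases eq_or_ne k.val 0 with h0 | h0
    · rw [if_pos h0]
      have hk : k = 0 := by rwa [← ZMod.val_eq_zero]
      exact dLen_le (.sr k) [.sr 0] (by simp [dihedralGens]) (by simp [hk])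
    · rw [if_neg h0]
      have h1 : dLen m (.sr k) ≤ 2 * k.val - 1 := by
        have hc : (1 : ZMod m) + ((k.val - 1 : ℕ) : ZMod m) = k := by
          push_cast [Nat.cast_sub (by omega : 1 ≤ k.val)]
          rw [ZMod.natCast_zmod_val]; ring
        have hp : (wB m (k.val - 1) ++ [DihedralGroup.sr 1]).prod = .sr k := by
          rw [List.prod_append, wB_prod, List.prod_singleton, r_mul_sr, sub_neg_eq_add, hc]
        have := dLen_le (.sr k) _ (fun x hx => by
          rcases List.mem_append.mp hx with h | h
          · exact wB_mem _ x h
          · simp at h; simp [h, dihedralGens]) hp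
        simp only [List.length_append, wB_length, List.length_singleton] at this
        omega
      have h2 : dLen m (.sr k) ≤ 2 * (m - k.val) + 1 := by
        have hc : (0 : ZMod m) - ((m - k.val : ℕ) : ZMod m) = k := by
          push_cast [Nat.cast_sub hv.le]
          simp [ZMod.natCast_self, ZMod.natCast_zmod_val]
        have hp : (wA m (m - k.val) ++ [DihedralGroup.sr 0]).prod = .sr k := by
          rw [List.prod_append, wA_prod, List.prod_singleton, r_mul_sr, hc]
        have := dLen_le (.sr k) _ (fun x hx => by
          rcases List.mem_append.mp hx with h | h
          · exact wA_mem _ x h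
          · simp at h; simp [h, dihedralGens]) hp
        simp only [List.length_append, wA_length, List.length_singleton] at this
        omega
      omega
  refine le_antisymm hub ?_
  have hne : {n | ∃ l : List (DihedralGroup m),
      l.length = n ∧ (∀ x ∈ l, x ∈ dihedralGens m) ∧ l.prod = .sr k}.Nonempty := by
    refine ⟨2 * (m - k.val) + 1, wA m (m - k.val) ++ [DihedralGroup.sr 0], ?_, ?_, ?_⟩
    · simp only [List.length_append, wA_length, List.length_singleton]
    · intro x hx
      rcases List.mem_append.mp hx with h | h
      · exact wA_mem _ x h
      · simp at h; simp [h, dihedralGens]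
    · rw [List.prod_append, wA_prod, List.prod_singleton, r_mul_sr]
      congr 1
      push_cast [Nat.cast_sub hv.le]
      simp [ZMod.natCast_self, ZMod.natCast_zmod_val]
  have := phi_le_dLen hm (.sr k) hne
  simpa [phi] using this

lemma mem_refl_iff (w : DihedralGroup m) :
    w ∈ dihedralRefl m ↔ ∃ k : ZMod m, w = .sr k := by
  constructor
  · rintro ⟨g, s, hs, rfl⟩
    rcases hs with h | h <;> subst h <;> rcases g with j | j <;> exact ⟨_, rfl⟩
  · rintro ⟨k, rfl⟩
    rcases Nat.even_or_odd k.val with ⟨c, hc⟩ | ⟨c, hc⟩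
    · refine ⟨.sr ((c : ZMod m)), .sr 0, Or.inl rfl, ?_⟩
      have hinv : (DihedralGroup.sr (c : ZMod m))⁻¹ = .sr (c : ZMod m) := rfl
      rw [hinv, sr_mul_sr, r_mul_sr]
      congr 1
      have : ((k.val : ℕ) : ZMod m) = k := ZMod.natCast_zmod_val k
      rw [← this]; push_cast [hc]; ring
    · refine ⟨.sr ((c + 1 : ℕ) : ZMod m), .sr 1, Or.inr rfl, ?_⟩
      have hinv : (DihedralGroup.sr ((c + 1 : ℕ) : ZMod m))⁻¹
          = .sr ((c + 1 : ℕ) : ZMod m) := rfl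
      rw [hinv, sr_mul_sr, r_mul_sr]
      congr 1
      have : ((k.val : ℕ) : ZMod m) = k := ZMod.natCast_zmod_val k
      rw [← this]; push_cast [hc]; ring

lemma refl_finset :
    Finset.univ.filter (fun w : DihedralGroup m => w ∈ dihedralRefl m)
      = Finset.image (fun k : ZMod m => DihedralGroup.sr k) Finset.univ := by
  ext w
  simp [mem_refl_iff, eq_comm]

lemma refl_card :
    (Finset.univ.filter (fun w : DihedralGroup m => w ∈ dihedralRefl m)).card = m := by
  rw [refl_finset, Finset.card_image_of_injective _ (fun a b h => by injection h)]
  simp [ZMod.card]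

omit [NeZero m] in
lemma hsum1 (k : ℕ) : ∑ v ∈ Finset.range (k + 1), 2 * v = k * k + k := by
  induction k with
  | zero => simp
  | succ k ih => rw [Finset.sum_range_succ, ih]; ring

omit [NeZero m] in
lemma hsum2 (k : ℕ) : ∑ v ∈ Finset.range k, (2 * v + 1) = k * k := by
  induction k with
  | zero => simp
  | succ k ih => rw [Finset.sum_range_succ, ih]; ring

omit [NeZero m] in
lemma hsum3 (k : ℕ) : ∑ v ∈ Finset.range k, 2 * (1 + v) = k * k + k := by
  induction k with
  | zero => simp
  | succ k ih => rw [Finset.sum_range_succ, ih]; ring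

omit [NeZero m] in
lemma hsum4 (k : ℕ) : ∑ v ∈ Finset.range k, (2 * (1 + v) + 1) = k * k + 2 * k := by
  induction k with
  | zero => simp
  | succ k ih => rw [Finset.sum_range_succ, ih]; ring

omit [NeZero m] in
lemma sum_r_range (n : ℕ) (hn : 1 ≤ n) :
    ∑ v ∈ Finset.range (2 * n), 2 * min v (2 * n - v) = 2 * n ^ 2 := by
  obtain ⟨p, rfl⟩ : ∃ p, n = p + 1 := ⟨n - 1, by omega⟩
  rw [Finset.range_eq_Ico,
    ← Finset.sum_Ico_consecutive _ (by omega : 0 ≤ (p + 1) + 1)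
      (by omega : (p + 1) + 1 ≤ 2 * (p + 1))]
  have e1 : ∑ v ∈ Finset.Ico 0 ((p + 1) + 1), 2 * min v (2 * (p + 1) - v)
      = ∑ v ∈ Finset.Ico 0 ((p + 1) + 1), 2 * v := by
    refine Finset.sum_congr rfl fun v hv => ?_
    rw [Finset.mem_Ico] at hv; omega
  have e2 : ∑ v ∈ Finset.Ico ((p + 1) + 1) (2 * (p + 1)), 2 * min v (2 * (p + 1) - v)
      = ∑ v ∈ Finset.Ico ((p + 1) + 1) (2 * (p + 1)), 2 * (2 * (p + 1) - v) := by
    refine Finset.sum_congr rfl fun v hv => ?_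
    rw [Finset.mem_Ico] at hv; omega
  rw [e1, e2, Finset.sum_Ico_reflect (fun u => 2 * u) ((p + 1) + 1)
    (by omega : 2 * (p + 1) ≤ 2 * (p + 1) + 1)]
  have h1 : 2 * (p + 1) + 1 - 2 * (p + 1) = 1 := by omega
  have h2 : 2 * (p + 1) + 1 - ((p + 1) + 1) = p + 1 := by omega
  rw [h1, h2, Finset.sum_Ico_eq_sum_range, Finset.sum_Ico_eq_sum_range]
  simp only [Nat.sub_zero, Nat.zero_add, Nat.add_sub_cancel]
  rw [hsum1, hsum3]
  ring

omit [NeZero m] in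
lemma sum_sr_range (n : ℕ) (hn : 1 ≤ n) :
    ∑ v ∈ Finset.range (2 * n),
      (if v = 0 then 1 else min (2 * v - 1) (2 * (2 * n - v) + 1)) = 2 * n ^ 2 := by
  obtain ⟨p, rfl⟩ : ∃ p, n = p + 1 := ⟨n - 1, by omega⟩
  rw [Finset.range_eq_Ico,
    ← Finset.sum_Ico_consecutive _ (by omega : 0 ≤ (p + 1) + 1)
      (by omega : (p + 1) + 1 ≤ 2 * (p + 1))]
  have e1 : ∑ v ∈ Finset.Ico 0 ((p + 1) + 1),
      (if v = 0 then 1 else min (2 * v - 1) (2 * (2 * (p + 1) - v) + 1))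
      = (p + 1) * (p + 1) + 1 := by
    rw [← Finset.range_eq_Ico, Finset.sum_range_succ']
    have hcongr : ∀ i ∈ Finset.range (p + 1),
        (if i + 1 = 0 then 1 else min (2 * (i + 1) - 1) (2 * (2 * (p + 1) - (i + 1)) + 1))
        = 2 * i + 1 := by
      intro i hi; rw [Finset.mem_range] at hi
      rw [if_neg (by omega)]; omega
    rw [Finset.sum_congr rfl hcongr, hsum2]
    norm_num
  have e2 : ∑ v ∈ Finset.Ico ((p + 1) + 1) (2 * (p + 1)),
      (if v = 0 then 1 else min (2 * v - 1) (2 * (2 * (p + 1) - v) + 1))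
      = ∑ v ∈ Finset.Ico ((p + 1) + 1) (2 * (p + 1)), (2 * (2 * (p + 1) - v) + 1) := by
    refine Finset.sum_congr rfl fun v hv => ?_
    rw [Finset.mem_Ico] at hv
    rw [if_neg (by omega)]; omega
  rw [e1, e2, Finset.sum_Ico_reflect (fun u => 2 * u + 1) ((p + 1) + 1)
    (by omega : 2 * (p + 1) ≤ 2 * (p + 1) + 1)]
  have h1 : 2 * (p + 1) + 1 - 2 * (p + 1) = 1 := by omega
  have h2 : 2 * (p + 1) + 1 - ((p + 1) + 1) = p + 1 := by omega
  rw [h1, h2, Finset.sum_Ico_eq_sum_range]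
  have h3 : p + 1 - 1 = p := by omega
  rw [h3, hsum4]
  ring

lemma sum_zmod (F : ℕ → ℕ) : ∑ k : ZMod m, F k.val = ∑ v ∈ Finset.range m, F v := by
  refine Finset.sum_nbij' (fun k : ZMod m => k.val) (fun v => (v : ZMod m))
    (fun k _ => Finset.mem_range.mpr (ZMod.val_lt k)) (fun v _ => Finset.mem_univ _)
    (fun k _ => ZMod.natCast_zmod_val k)
    (fun v hv => ZMod.val_cast_of_lt (Finset.mem_range.mp hv)) (fun k _ => rfl)

lemma sum_dLen_sr (hm : 2 ≤ m) (n : ℕ) (hmn : m = 2 * n) (hn : 1 ≤ n) :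
    ∑ k : ZMod m, dLen m (.sr k) = 2 * n ^ 2 := by
  simp_rw [dLen_sr hm]
  rw [sum_zmod (fun v => if v = 0 then 1 else min (2 * v - 1) (2 * (m - v) + 1))]
  subst hmn
  exact sum_sr_range n hn

lemma sum_dLen_r (hm : 2 ≤ m) (n : ℕ) (hmn : m = 2 * n) (hn : 1 ≤ n) :
    ∑ k : ZMod m, dLen m (.r k) = 2 * n ^ 2 := by
  simp_rw [dLen_r hm]
  rw [sum_zmod (fun v => 2 * min v (m - v))]
  subst hmn
  exact sum_r_range n hn

lemma sum_mul_refl (hm : 2 ≤ m) (n : ℕ) (hmn : m = 2 * n) (hn : 1 ≤ n)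
    (w : DihedralGroup m) :
    ∑ b : ZMod m, dLen m (.sr b * w) = 2 * n ^ 2 := by
  rcases w with j | j
  · simp only [sr_mul_r]
    rw [← sum_dLen_sr hm n hmn hn]
    exact Fintype.sum_equiv (Equiv.addRight j)
      (fun b => dLen m (.sr (b + j))) (fun k => dLen m (.sr k)) (fun b => rfl)
  · simp only [sr_mul_sr]
    rw [← sum_dLen_r hm n hmn hn]
    exact Fintype.sum_equiv (Equiv.subLeft j)
      (fun b => dLen m (.r (j - b))) (fun k => dLen m (.r k)) (fun b => rfl)

lemma big_sum (hm : 2 ≤ m) (n : ℕ) (hmn : m = 2 * n) (hn : 1 ≤ n) (t : ℕ) :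
    ∑ a : Fin (t + 1) → ZMod m,
      dLen m (List.ofFn (fun i => DihedralGroup.sr (a i))).prod = 2 * n ^ 2 * m ^ t := by
  rw [← Fintype.sum_equiv (Fin.consEquiv (fun _ : Fin (t + 1) => ZMod m))
    (fun p : ZMod m × (Fin t → ZMod m) =>
      dLen m (List.ofFn (fun i => DihedralGroup.sr ((Fin.cons p.1 p.2 : Fin (t + 1) → ZMod m) i))).prod)
    (fun a => dLen m (List.ofFn (fun i => DihedralGroup.sr (a i))).prod)
    (fun p => by rfl)]
  rw [Fintype.sum_prod_type]
  have key : ∀ b : ZMod m, ∀ a : Fin t → ZMod m,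
      (List.ofFn (fun i => DihedralGroup.sr ((Fin.cons b a : Fin (t + 1) → ZMod m) i))).prod
      = .sr b * (List.ofFn (fun i => DihedralGroup.sr (a i))).prod := by
    intro b a
    rw [List.ofFn_succ]
    simp [Fin.cons_zero, Fin.cons_succ]
  simp_rw [key]
  rw [Finset.sum_comm]
  have : ∀ a : Fin t → ZMod m,
      ∑ b : ZMod m, dLen m (.sr b * (List.ofFn (fun i => DihedralGroup.sr (a i))).prod)
      = 2 * n ^ 2 := fun a => sum_mul_refl hm n hmn hn _
  rw [Finset.sum_congr rfl (fun a _ => this a), Finset.sum_const, Finset.card_univ]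
  simp [mul_comm]

def unSr : DihedralGroup m → ZMod m
  | .r j => j
  | .sr j => j

lemma filter_sum (t : ℕ) :
    ∑ f ∈ Finset.univ.filter (fun f : Fin t → DihedralGroup m => ∀ i, f i ∈ dihedralRefl m),
      (dLen m (List.ofFn f).prod : ℝ)
    = ∑ a : Fin t → ZMod m,
      (dLen m (List.ofFn (fun i => DihedralGroup.sr (a i))).prod : ℝ) := by
  refine Finset.sum_nbij' (fun f (i : Fin t) => unSr (f i))
    (fun a (i : Fin t) => DihedralGroup.sr (a i)) (fun f _ => Finset.mem_univ _)
    (fun a _ => Finset.mem_filter.mpr ⟨Finset.mem_univ _,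
      fun i => (mem_refl_iff _).mpr ⟨a i, rfl⟩⟩) ?_ (fun a _ => rfl) ?_
  · intro f hf
    funext i
    show DihedralGroup.sr (unSr (f i)) = f i
    obtain ⟨k, hk⟩ := (mem_refl_iff (f i)).mp ((Finset.mem_filter.mp hf).2 i)
    rw [hk]; rfl
  · intro f hf
    have hfe : (fun i => DihedralGroup.sr (unSr (f i))) = f := by
      funext i
      obtain ⟨k, hk⟩ := (mem_refl_iff (f i)).mp ((Finset.mem_filter.mp hf).2 i)
      rw [hk]; rfl
    show (dLen m (List.ofFn f).prod : ℝ)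
        = (dLen m (List.ofFn fun i => DihedralGroup.sr (unSr (f i))).prod : ℝ)
    rw [hfe]

theorem expected_length_reflections_dihedral_even (m t : ℕ) [NeZero m]
    (hm : 2 ≤ m) (hme : Even m) (ht : 1 ≤ t) :
    dihedralExpLen m t = (m : ℝ) / 2 := by
  obtain ⟨n, hn2⟩ := hme
  have hmn : m = 2 * n := by omega
  have hn : 1 ≤ n := by omega
  obtain ⟨t', rfl⟩ : ∃ t', t = t' + 1 := ⟨t - 1, by omega⟩
  unfold dihedralExpLen
  rw [refl_card, filter_sum, ← Nat.cast_sum, big_sum hm n hmn hn t']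
  have hm0 : (m : ℝ) ≠ 0 := Nat.cast_ne_zero.mpr (by omega)
  push_cast
  rw [hmn]
  push_cast
  have hn0 : (n : ℝ) ≠ 0 := Nat.cast_ne_zero.mpr (by omega)
  field_simp
  ring
end

section
/- For the dihedral group I_2(m) and even t ≥ 0, the probability that a product of t independent uniformly random simple reflections equals the identity is (1/2^t) ∑_{|k| ≤ ⌊t/(2m)⌋} C(t, t/2 - km). -/
open Classical

/-- A uniformly random choice from the two simple reflections of `I₂(m)`,
encoded by a boolean. -/
def dihedralGen (m : ℕ) (b : Bool) : DihedralGroup m :=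
  if b then DihedralGroup.sr 1 else DihedralGroup.sr 0

namespace DihedralCountAux

variable {R : Type*} [CommRing R]

def altS : List R → R
  | [] => 0
  | a :: l => a - altS l

lemma altS_ofFn : ∀ {t : ℕ} (v : Fin t → R), altS (List.ofFn v) = ∑ i : Fin t, (-1 : R)^(i.val) * v i
  | 0, v => by simp [altS]
  | t+1, v => by
    rw [List.ofFn_succ]
    show v 0 - altS (List.ofFn (fun i => v i.succ)) = _
    rw [altS_ofFn, Fin.sum_univ_succ]
    have : ∀ i : Fin t, (-1:R)^((i.succ : ℕ)) * v i.succ = -((-1)^(i.val) * v i.succ) := by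
      intro i; simp [Fin.val_succ, pow_succ]
    simp only [this, Finset.sum_neg_distrib]
    simp [sub_eq_add_neg]

open DihedralGroup in
lemma prod_map_sr (m : ℕ) : ∀ l : List (ZMod m),
    (l.map DihedralGroup.sr).prod =
      if Even l.length then DihedralGroup.r (-(altS l)) else DihedralGroup.sr (altS l)
  | [] => by simp [altS]
  | a :: l => by
    rw [List.map_cons, List.prod_cons, prod_map_sr m l]
    by_cases h : Even l.length
    · simp only [h, if_true, List.length_cons, Nat.even_add_one, not_true, if_false, altS,
        sr_mul_r]
      ring_nf
    · simp only [h, if_false, List.length_cons, Nat.even_add_one, not_false_iff, if_true, altS,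
        sr_mul_sr]
      ring_nf

noncomputable def N {t : ℕ} (f : Fin t → Bool) : ℤ :=
  ∑ i : Fin t, (-1 : ℤ)^(i.val) * (if f i then 1 else 0)

lemma prod_eq_one_iff (m t : ℕ) (ht : Even t) (f : Fin t → Bool) :
    (List.ofFn (fun i => dihedralGen m (f i))).prod = 1 ↔ (m : ℤ) ∣ N f := by
  have h1 : (fun i => dihedralGen m (f i))
      = (fun i => DihedralGroup.sr ((if f i then 1 else 0 : ZMod m))) := by
    funext i; cases hfi : f i <;> simp [dihedralGen, hfi]
  rw [h1]
  have h2 : (List.ofFn fun i => DihedralGroup.sr (if f i = true then 1 else 0 : ZMod m))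
      = (List.ofFn fun i : Fin t => (if f i then 1 else 0 : ZMod m)).map DihedralGroup.sr := by
    rw [List.map_ofFn]; rfl
  rw [h2, prod_map_sr m]
  have hlen : Even (List.ofFn (fun i : Fin t => (if f i then 1 else 0 : ZMod m))).length := by
    simpa using ht
  rw [if_pos hlen, altS_ofFn, DihedralGroup.one_def]
  have hcast : (∑ i : Fin t, (-1 : ZMod m)^(i.val) * (if f i then 1 else 0))
      = ((N f : ℤ) : ZMod m) := by
    unfold N
    push_cast
    apply Finset.sum_congr rfl
    intro i _
    cases hfi : f i <;> simp [hfi]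
  constructor
  · intro h
    have := (DihedralGroup.r.injEq _ _).mp h
    rw [neg_eq_zero] at this
    rw [hcast] at this
    exact (ZMod.intCast_zmod_eq_zero_iff_dvd _ _).mp this
  · intro h
    have : ((N f : ℤ) : ZMod m) = 0 := (ZMod.intCast_zmod_eq_zero_iff_dvd _ _).mpr h
    rw [← hcast] at this
    rw [this, neg_zero]

def cg {t : ℕ} (g : Fin t → Bool) : ℕ := (Finset.univ.filter (fun i => g i)).card

lemma count_c (t c : ℕ) :
    (Finset.univ.filter (fun g : Fin t → Bool => cg g = c)).card = t.choose c := by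
  have h := Finset.card_powersetCard c (Finset.univ : Finset (Fin t))
  rw [Finset.card_univ, Fintype.card_fin] at h
  rw [← h]
  apply Finset.card_bij (fun g _ => Finset.univ.filter (fun i => g i))
  · intro g hg
    simp only [Finset.mem_filter] at hg
    simp only [Finset.mem_powersetCard]
    exact ⟨Finset.filter_subset _ _, hg.2⟩
  · intro g hg h hh hgh
    funext i
    have := Finset.ext_iff.mp hgh i
    simp only [Finset.mem_filter, Finset.mem_univ, true_and] at this
    by_cases hgi : g i <;> by_cases hhi : h i <;> simp_all
  · intro s hs
    rw [Finset.mem_powersetCard] at hs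
    refine ⟨fun i => if i ∈ s then true else false, ?_, ?_⟩
    · change (fun i => if i ∈ s then true else false) ∈ Finset.univ.filter (fun g : Fin t → Bool => cg g = c)
      rw [Finset.mem_filter]
      simp only [Finset.mem_filter, Finset.mem_univ, true_and, cg]
      rw [← hs.2]
      congr 1
      ext i; simp
    · ext i; simp

lemma odd_count (n : ℕ) :
    ∑ i ∈ Finset.range (2*n), (if i % 2 = 1 then (1:ℤ) else 0) = n := by
  induction n with
  | zero => simp
  | succ n ih =>
    have : 2 * (n+1) = (2*n + 1) + 1 := by ring
    rw [this, Finset.sum_range_succ, Finset.sum_range_succ, ih]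
    have h1 : (2*n) % 2 = 0 := by omega
    have h2 : (2*n+1) % 2 = 1 := by omega
    simp [h1, h2]

def flipF {t : ℕ} (f : Fin t → Bool) : Fin t → Bool :=
  fun i => xor (f i) (decide (i.val % 2 = 1))

lemma flipF_invol {t : ℕ} (f : Fin t → Bool) : flipF (flipF f) = f := by
  funext i
  simp [flipF, Bool.xor_assoc]

lemma cg_flipF {n : ℕ} (f : Fin (2*n) → Bool) : (cg (flipF f) : ℤ) = n + N f := by
  have hcard : (cg (flipF f) : ℤ) = ∑ i : Fin (2*n), (if flipF f i then (1:ℤ) else 0) := by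
    rw [cg, Finset.card_filter]
    push_cast
    rfl
  rw [hcard]
  have hterm : ∀ i : Fin (2*n), (if flipF f i then (1:ℤ) else 0)
      = (if i.val % 2 = 1 then (1:ℤ) else 0) + (-1:ℤ)^(i.val) * (if f i then 1 else 0) := by
    intro i
    have := Nat.mod_two_eq_zero_or_one i.val
    rcases this with h | h
    · have he : Even i.val := Nat.even_iff.mpr h
      have : (i.val % 2 = 1) = False := by simp [h]
      cases hfi : f i <;> simp [flipF, hfi, h, he.neg_one_pow]
    · have ho : Odd i.val := Nat.odd_iff.mpr h
      cases hfi : f i <;> simp [flipF, hfi, h, ho.neg_one_pow]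
  rw [Finset.sum_congr rfl (fun i _ => hterm i), Finset.sum_add_distrib]
  have h2 : ∑ i : Fin (2*n), (if i.val % 2 = 1 then (1:ℤ) else 0) = n := by
    rw [Fin.sum_univ_eq_sum_range (fun i => if i % 2 = 1 then (1:ℤ) else 0)]
    exact odd_count n
  rw [h2]
  rfl

end DihedralCountAux

open DihedralCountAux
theorem prob_product_simple_reflections_eq_one (m t : ℕ) (hm : 2 ≤ m) (ht : Even t) :
    ((Finset.univ.filter (fun f : Fin t → Bool =>
        (List.ofFn (fun i => dihedralGen m (f i))).prod = 1)).card : ℝ) / 2 ^ t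
    = (1 / 2 ^ t) *
        ∑ k ∈ Finset.Icc (-((t / (2 * m) : ℕ) : ℤ)) ((t / (2 * m) : ℕ) : ℤ),
          (t.choose (((t / 2 : ℕ) : ℤ) - k * m).toNat : ℝ) := by
  obtain ⟨n, rfl⟩ : ∃ n, t = 2 * n := by
    obtain ⟨n, hn⟩ := ht; exact ⟨n, by omega⟩
  have hm0 : (0:ℤ) < (m:ℤ) := by exact_mod_cast (by omega : 0 < m)
  have ht2 : (2*n) / 2 = n := by omega
  have htm : (2*n) / (2*m) = n / m := Nat.mul_div_mul_left n m (by norm_num)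
  obtain ⟨q, hq⟩ : ∃ q, n / m = q := ⟨_, rfl⟩
  rw [hq] at htm
  have hqm : q * m ≤ n := hq ▸ Nat.div_mul_le_self n m
  have hqm2 : n < q * m + m := by
    have h3 : q * m + n % m = n := by rw [← hq, mul_comm]; exact Nat.div_add_mod n m
    have h4 : n % m < m := Nat.mod_lt n (by omega)
    omega
  have hqmZ : (q:ℤ) * m ≤ (n:ℤ) := by exact_mod_cast hqm
  have hqm2Z : (n:ℤ) < (q:ℤ) * m + m := by exact_mod_cast hqm2
  rw [htm, ht2]
  -- step c: decompose by the value of cg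
  have hc : (Finset.univ.filter (fun g : Fin (2*n) → Bool => (m:ℤ) ∣ (cg g : ℤ) - n))
      = (Finset.Icc (-(q:ℤ)) (q:ℤ)).biUnion
          (fun k => Finset.univ.filter (fun g : Fin (2*n) → Bool =>
            cg g = ((n:ℤ) + k * m).toNat)) := by
    ext g
    simp only [Finset.mem_filter, Finset.mem_univ, true_and, Finset.mem_biUnion,
      Finset.mem_Icc]
    constructor
    · rintro ⟨k, hk⟩
      have hcle : cg g ≤ 2*n := by
        have := Finset.card_filter_le (Finset.univ : Finset (Fin (2*n))) (fun i => g i)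
        simpa [cg] using this
      refine ⟨k, ⟨?_, ?_⟩, ?_⟩
      · have hmk : -((m:ℤ)*k) ≤ n := by omega
        have h5 : (m:ℤ) * (-k) < m * (q+1) := by
          rw [mul_neg]; nlinarith
        have := lt_of_mul_lt_mul_left h5 hm0.le
        omega
      · have hmk : (m:ℤ)*k ≤ n := by omega
        have h5 : (m:ℤ) * k < m * (q+1) := by nlinarith
        have := lt_of_mul_lt_mul_left h5 hm0.le
        omega
      · have : (n:ℤ) + k * m = (cg g : ℤ) := by linarith [hk, mul_comm (m:ℤ) k]
        omega
    · rintro ⟨k, ⟨hk1, hk2⟩, hcg⟩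
      have hkm1 : -((n:ℤ)) ≤ k * m := by nlinarith
      have hnn : (0:ℤ) ≤ (n:ℤ) + k * m := by omega
      have : (cg g : ℤ) = (n:ℤ) + k * m := by omega
      exact ⟨k, by linarith [mul_comm (m:ℤ) k, mul_comm k (m:ℤ)]⟩
  -- disjointness
  have hdisj : ∀ k1 ∈ Finset.Icc (-(q:ℤ)) (q:ℤ), ∀ k2 ∈ Finset.Icc (-(q:ℤ)) (q:ℤ), k1 ≠ k2 →
      Disjoint (Finset.univ.filter (fun g : Fin (2*n) → Bool => cg g = ((n:ℤ) + k1 * m).toNat))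
        (Finset.univ.filter (fun g : Fin (2*n) → Bool => cg g = ((n:ℤ) + k2 * m).toNat)) := by
    intro k1 hk1 k2 hk2 hne
    rw [Finset.mem_Icc] at hk1 hk2
    rw [Finset.disjoint_left]
    intro g hg1 hg2
    simp only [Finset.mem_filter, Finset.mem_univ, true_and] at hg1 hg2
    apply hne
    have e1 : (0:ℤ) ≤ (n:ℤ) + k1 * m := by nlinarith [hk1.1, hk1.2]
    have e2 : (0:ℤ) ≤ (n:ℤ) + k2 * m := by nlinarith [hk2.1, hk2.2]
    have e3 : (n:ℤ) + k1 * m = (n:ℤ) + k2 * m := by omega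
    have : k1 * (m:ℤ) = k2 * m := by linarith
    exact mul_right_cancel₀ (ne_of_gt hm0) this
  -- per-term symmetry of binomial coefficients
  have hsymm : ∀ k ∈ Finset.Icc (-(q:ℤ)) (q:ℤ),
      (2*n).choose ((n:ℤ) + k * m).toNat = (2*n).choose ((n:ℤ) - k * m).toNat := by
    intro k hk
    rw [Finset.mem_Icc] at hk
    have e1 : (0:ℤ) ≤ (n:ℤ) + k * m := by nlinarith [hk.1, hk.2]
    have e2 : (0:ℤ) ≤ (n:ℤ) - k * m := by nlinarith [hk.1, hk.2]
    have e3 : ((n:ℤ) + k * m).toNat + ((n:ℤ) - k * m).toNat = 2*n := by omega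
    have e4 : ((n:ℤ) - k * m).toNat ≤ 2*n := by omega
    have := Nat.choose_symm e4 (n := 2*n)
    rw [← this]
    congr 1
    omega
  -- step b: move to the flipped counting problem
  have hb : (Finset.univ.filter (fun f : Fin (2*n) → Bool =>
        (List.ofFn (fun i => dihedralGen m (f i))).prod = 1)).card
      = (Finset.univ.filter (fun g : Fin (2*n) → Bool =>
          (m:ℤ) ∣ (cg g : ℤ) - n)).card := by
    apply Finset.card_bij' (fun f _ => flipF f) (fun g _ => flipF g)
    · intro f hf
      simp only [Finset.mem_filter, Finset.mem_univ, true_and] at hf ⊢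
      have hN : (m:ℤ) ∣ N f := (prod_eq_one_iff m (2*n) (by exact ⟨n, by ring⟩) f).mp hf
      have := cg_flipF f
      have : (cg (flipF f) : ℤ) - n = N f := by omega
      rw [this]; exact hN
    · intro g hg
      simp only [Finset.mem_filter, Finset.mem_univ, true_and] at hg ⊢
      rw [prod_eq_one_iff m (2*n) (by exact ⟨n, by ring⟩)]
      have h1 := cg_flipF (flipF g)
      rw [flipF_invol] at h1
      have : N (flipF g) = (cg g : ℤ) - n := by omega
      rw [this]; exact hg
    · intro f _; exact flipF_invol f
    · intro g _; exact flipF_invol g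
  have hcard : (Finset.univ.filter (fun f : Fin (2*n) → Bool =>
        (List.ofFn (fun i => dihedralGen m (f i))).prod = 1)).card
      = ∑ k ∈ Finset.Icc (-(q:ℤ)) (q:ℤ), (2*n).choose ((n:ℤ) - k * m).toNat := by
    rw [hb, hc, Finset.card_biUnion hdisj]
    apply Finset.sum_congr rfl
    intro k hk
    rw [count_c (2*n) (((n:ℤ) + k * m).toNat), hsymm k hk]
  rw [hcard]
  push_cast
  ring
end

section
/- For n ≥ 2 and t ≥ 0, the expected number of inversions of a product of t independent uniformly random transpositions in the symmetric group S_n equals n(n-1)/4 - ((n+1)(n-1)/6)(1 - 2/(n-1))^t - ((n-1)(n-2)/12)(1 - 4/(n-1))^t. -/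
open Classical

/-- The number of inversions of a permutation of `{0, …, n-1}`. -/
noncomputable def invCount (n : ℕ) (π : Equiv.Perm (Fin n)) : ℕ :=
  (Finset.univ.filter (fun p : Fin n × Fin n => p.1 < p.2 ∧ π p.2 < π p.1)).card

/-- Expected number of inversions of a product of `t` independent uniformly
random transpositions in the symmetric group `Sₙ`. -/
noncomputable def expInv (n t : ℕ) : ℝ :=
  (∑ f ∈ Finset.univ.filter (fun f : Fin t → Equiv.Perm (Fin n) => ∀ i, (f i).IsSwap),
      (invCount n (List.ofFn f).prod : ℝ)) /
    ((Finset.univ.filter (fun σ : Equiv.Perm (Fin n) => σ.IsSwap)).card : ℝ) ^ t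

open Finset Equiv

namespace RT


variable {n : ℕ}

def Pairs (n : ℕ) : Finset (Fin n × Fin n) := Finset.univ.filter (fun p => p.1 < p.2)

noncomputable def Sw (n : ℕ) : Finset (Equiv.Perm (Fin n)) := Finset.univ.filter (fun σ => σ.IsSwap)

noncomputable def Iv (π : Equiv.Perm (Fin n)) : ℝ :=
  ∑ p ∈ Pairs n, (if π p.2 < π p.1 then (1:ℝ) else 0)

noncomputable def fv (π : Equiv.Perm (Fin n)) (x : Fin n) : ℝ := ((π x : ℕ) : ℝ)

noncomputable def Dv (π : Equiv.Perm (Fin n)) : ℝ :=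
  ∑ p ∈ Pairs n, (fv π p.1 - fv π p.2)

noncomputable def cc (n : ℕ) (p : Fin n) : ℝ := (n : ℝ) - 1 - 2 * ((p : ℕ) : ℝ)

/-- symmetrization -/
lemma sym_sum (X : Fin n → Fin n → ℝ) (hX : ∀ a b, X a b = X b a) :
    ∑ a, ∑ b, X a b = 2 * ∑ p ∈ Pairs n, X p.1 p.2 + ∑ a, X a a := by
  have h0 : ∑ p : Fin n × Fin n, X p.1 p.2 = ∑ a, ∑ b, X a b := by
    rw [← Finset.univ_product_univ, Finset.sum_product]
  rw [← h0]
  rw [← Finset.sum_filter_add_sum_filter_not Finset.univ (fun p : Fin n × Fin n => p.1 < p.2)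
    (fun p => X p.1 p.2)]
  rw [← Finset.sum_filter_add_sum_filter_not (Finset.univ.filter (fun p : Fin n × Fin n => ¬ p.1 < p.2))
    (fun p : Fin n × Fin n => p.2 < p.1) (fun p => X p.1 p.2)]
  have e1 : ∑ p ∈ (Finset.univ.filter (fun p : Fin n × Fin n => ¬ p.1 < p.2)).filter
      (fun p : Fin n × Fin n => p.2 < p.1), X p.1 p.2 = ∑ p ∈ Pairs n, X p.1 p.2 := by
    refine Finset.sum_nbij' (fun p => (p.2, p.1)) (fun p => (p.2, p.1)) ?_ ?_ ?_ ?_ ?_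
    · intro a ha; simp only [Finset.mem_filter, Finset.mem_univ, true_and] at ha ⊢
      simp [Pairs, ha.2]
    · intro a ha; simp only [Pairs, Finset.mem_filter, Finset.mem_univ, true_and] at ha ⊢
      exact ⟨not_lt.2 ha.le, ha⟩
    · intro a _; rfl
    · intro a _; rfl
    · intro a _; exact hX _ _
  have e2 : ∑ p ∈ (Finset.univ.filter (fun p : Fin n × Fin n => ¬ p.1 < p.2)).filter
      (fun p : Fin n × Fin n => ¬ p.2 < p.1), X p.1 p.2 = ∑ a, X a a := by
    refine Finset.sum_nbij' (fun p => p.1) (fun a => (a, a)) ?_ ?_ ?_ ?_ ?_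
    · intro a _; exact Finset.mem_univ _
    · intro a _; simp
    · intro a ha
      simp only [Finset.mem_filter, Finset.mem_univ, true_and, not_lt] at ha
      have : a.1 = a.2 := le_antisymm ha.2 ha.1
      ext <;> simp [this]
    · intro a _; rfl
    · intro a ha
      simp only [Finset.mem_filter, Finset.mem_univ, true_and, not_lt] at ha
      have : a.1 = a.2 := le_antisymm ha.2 ha.1
      rw [← this]
  rw [e1, e2, Pairs]; ring

lemma sum_Sw (F : Equiv.Perm (Fin n) → ℝ) :
    ∑ τ ∈ Sw n, F τ = ∑ p ∈ Pairs n, F (Equiv.swap p.1 p.2) := by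
  symm
  refine Finset.sum_bij (fun p _ => Equiv.swap p.1 p.2) ?_ ?_ ?_ ?_
  · intro p hp
    simp only [Pairs, Finset.mem_filter, Finset.mem_univ, true_and] at hp
    simp only [Sw, Finset.mem_filter, Finset.mem_univ, true_and]
    exact ⟨p.1, p.2, hp.ne, rfl⟩
  · intro p hp q hq h
    simp only [Pairs, Finset.mem_filter, Finset.mem_univ, true_and] at hp hq
    have h' : Equiv.swap p.1 p.2 = Equiv.swap q.1 q.2 := h
    have hb : p.2 = Equiv.swap q.1 q.2 p.1 := by rw [← h', Equiv.swap_apply_left]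
    rw [Equiv.swap_apply_def] at hb
    have hh : p.1 = q.1 ∧ p.2 = q.2 := by
      split_ifs at hb with h1 h2
      · exact ⟨h1, hb⟩
      · exact absurd (((hp.trans_eq hb).trans hq).trans_eq h2.symm) (lt_irrefl _)
      · exact absurd hb hp.ne'
    exact Prod.ext_iff.mpr hh
  · intro τ hτ
    simp only [Sw, Finset.mem_filter, Finset.mem_univ, true_and] at hτ
    obtain ⟨x, y, hxy, rfl⟩ := hτ
    rcases lt_or_gt_of_ne hxy with h | h
    · exact ⟨(x, y), by simp [Pairs, h], rfl⟩
    · exact ⟨(y, x), by simp [Pairs, h], Equiv.swap_comm y x⟩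
  · intro p _; rfl

lemma card_Pairs : ((Pairs n).card : ℝ) = (n : ℝ) * ((n:ℝ) - 1) / 2 := by
  have := sym_sum (n := n) (fun _ _ => (1:ℝ)) (fun _ _ => rfl)
  simp only [Finset.sum_const, Finset.card_univ, Fintype.card_fin, nsmul_eq_mul, mul_one] at this
  linarith

lemma card_Sw : (((Sw n)).card : ℝ) = (n : ℝ) * ((n:ℝ) - 1) / 2 := by
  have h := sum_Sw (n := n) (fun _ => (1:ℝ))
  simp only [Finset.sum_const, nsmul_eq_mul, mul_one] at h
  rw [h, card_Pairs]

lemma sum_ind_gt (u : Fin n) :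
    ∑ b : Fin n, (if u < b then (1:ℝ) else 0) = (n : ℝ) - 1 - ((u:ℕ):ℝ) := by
  rw [Finset.sum_boole]
  have : Finset.univ.filter (fun b => u < b) = Finset.Ioi u := by ext b; simp
  rw [this, Fin.card_Ioi]
  have h1 : (u : ℕ) + 1 ≤ n := u.isLt
  have : n - 1 - (u:ℕ) = n - (1 + (u:ℕ)) := by omega
  rw [this, Nat.cast_sub (by omega)]
  push_cast; ring

lemma sum_ind_lt (u : Fin n) :
    ∑ b : Fin n, (if b < u then (1:ℝ) else 0) = ((u:ℕ):ℝ) := by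
  rw [Finset.sum_boole]
  have : Finset.univ.filter (fun b => b < u) = Finset.Iio u := by ext b; simp
  rw [this, Fin.card_Iio]

lemma sum_split_two {M : Type*} [AddCommMonoid M] {p q : Fin n} (hpq : p ≠ q) (f : Fin n → M) :
    ∑ x, f x = f p + f q + ∑ x ∈ Finset.univ \ {p, q}, f x := by
  have h1 : (Finset.univ : Finset (Fin n)) = insert p (insert q (Finset.univ \ {p, q})) := by
    ext x
    by_cases hx1 : x = p <;> by_cases hx2 : x = q <;> simp [hx1, hx2]
  have hq' : q ∉ Finset.univ \ {p, q} := by simp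
  have hp' : p ∉ insert q (Finset.univ \ {p, q}) := by simp [hpq]
  conv_lhs => rw [h1]
  rw [Finset.sum_insert hp', Finset.sum_insert hq', ← add_assoc]



lemma pair_sum_eq (f : Fin n → ℝ) :
    ∑ p ∈ Pairs n, (f p.1 - f p.2) = ∑ p : Fin n, cc n p * f p := by
  have h1 : ∑ p ∈ Pairs n, (f p.1 - f p.2)
      = ∑ a : Fin n, ∑ b : Fin n, (if a < b then f a - f b else 0) := by
    rw [Pairs, Finset.sum_filter, ← Finset.univ_product_univ, Finset.sum_product]
  rw [h1]
  have h2 : ∀ a b : Fin n, (if a < b then f a - f b else 0)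
      = f a * (if a < b then (1:ℝ) else 0) - f b * (if b > a then (1:ℝ) else 0) := by
    intro a b; by_cases h : a < b <;> simp [h]
  simp only [h2]
  simp only [Finset.sum_sub_distrib]
  have h3 : ∑ a : Fin n, ∑ b : Fin n, f a * (if a < b then (1:ℝ) else 0)
      = ∑ a : Fin n, f a * ((n:ℝ) - 1 - ((a:ℕ):ℝ)) := by
    refine Finset.sum_congr rfl fun a _ => ?_
    rw [← Finset.mul_sum, sum_ind_gt]
  have h4 : ∑ a : Fin n, ∑ b : Fin n, f b * (if b > a then (1:ℝ) else 0)
      = ∑ b : Fin n, f b * ((b:ℕ):ℝ) := by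
    rw [Finset.sum_comm]
    refine Finset.sum_congr rfl fun b _ => ?_
    rw [← Finset.mul_sum]
    congr 1
    exact sum_ind_lt b
  rw [h3, h4, ← Finset.sum_sub_distrib]
  refine Finset.sum_congr rfl fun p _ => ?_
  unfold cc; ring

lemma Dv_eq (π : Equiv.Perm (Fin n)) : Dv π = ∑ p : Fin n, cc n p * fv π p :=
  pair_sum_eq (fv π)

lemma sum_range_cast (m : ℕ) : ∑ i ∈ Finset.range m, (i:ℝ) = (m:ℝ) * ((m:ℝ) - 1) / 2 := by
  induction m with
  | zero => simp
  | succ k ih => rw [Finset.sum_range_succ, ih]; push_cast; ring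

lemma sum_range_sq_cast (m : ℕ) : ∑ i ∈ Finset.range m, (i:ℝ)^2
    = (m:ℝ) * ((m:ℝ) - 1) * (2*(m:ℝ) - 1) / 6 := by
  induction m with
  | zero => simp
  | succ k ih => rw [Finset.sum_range_succ, ih]; push_cast; ring

lemma sum_fin_cast : ∑ p : Fin n, ((p:ℕ):ℝ) = (n:ℝ) * ((n:ℝ) - 1) / 2 := by
  rw [Fin.sum_univ_eq_sum_range (fun i => (i:ℝ)) n, sum_range_cast]

lemma sum_fin_sq_cast : ∑ p : Fin n, ((p:ℕ):ℝ)^2 = (n:ℝ) * ((n:ℝ) - 1) * (2*(n:ℝ) - 1) / 6 := by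
  rw [Fin.sum_univ_eq_sum_range (fun i => (i:ℝ)^2) n, sum_range_sq_cast]

lemma sum_cc : ∑ p : Fin n, cc n p = 0 := by
  unfold cc
  rw [Finset.sum_sub_distrib, Finset.sum_sub_distrib, ← Finset.mul_sum, sum_fin_cast]
  simp [Finset.sum_const, Finset.card_univ]
  ring

lemma sum_fv (π : Equiv.Perm (Fin n)) : ∑ p : Fin n, fv π p = (n:ℝ) * ((n:ℝ) - 1) / 2 := by
  unfold fv
  rw [Equiv.sum_comp π (fun x : Fin n => ((x:ℕ):ℝ))]
  exact sum_fin_cast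

lemma Dv_mul_swap (π : Equiv.Perm (Fin n)) (a b : Fin n) :
    Dv (π * Equiv.swap a b) = Dv π + (cc n a - cc n b) * (fv π b - fv π a) := by
  rcases eq_or_ne a b with rfl | hab
  · simp [Equiv.swap_self]
    rfl
  · rw [Dv_eq, Dv_eq, sum_split_two hab (f := fun p => cc n p * fv (π * Equiv.swap a b) p),
      sum_split_two hab (f := fun p => cc n p * fv π p)]
    have hrest : ∑ x ∈ Finset.univ \ {a, b}, cc n x * fv (π * Equiv.swap a b) x
        = ∑ x ∈ Finset.univ \ {a, b}, cc n x * fv π x := by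
      refine Finset.sum_congr rfl fun x hx => ?_
      simp only [Finset.mem_sdiff, Finset.mem_univ, true_and, Finset.mem_insert,
        Finset.mem_singleton, not_or] at hx
      unfold fv
      rw [Equiv.Perm.mul_apply, Equiv.swap_apply_of_ne_of_ne hx.1 hx.2]
    have ha : fv (π * Equiv.swap a b) a = fv π b := by
      unfold fv; rw [Equiv.Perm.mul_apply, Equiv.swap_apply_left]
    have hb : fv (π * Equiv.swap a b) b = fv π a := by
      unfold fv; rw [Equiv.Perm.mul_apply, Equiv.swap_apply_right]
    rw [hrest, ha, hb]
    ring

lemma L1 (π : Equiv.Perm (Fin n)) :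
    ∑ τ ∈ Sw n, Dv (π * τ) = ((n:ℝ) * ((n:ℝ) - 3) / 2) * Dv π := by
  rw [sum_Sw (fun τ => Dv (π * τ))]
  have hX : ∀ a b : Fin n, Dv (π * Equiv.swap a b) = Dv (π * Equiv.swap b a) := by
    intro a b; rw [Equiv.swap_comm]
  have hsym := sym_sum (fun a b => Dv (π * Equiv.swap a b)) hX
  have hdiag : ∑ a : Fin n, Dv (π * Equiv.swap a a) = (n:ℝ) * Dv π := by
    have : ∀ a : Fin n, Dv (π * Equiv.swap a a) = Dv π := by
      intro a
      rw [Dv_mul_swap]; ring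
    rw [Finset.sum_congr rfl (fun a _ => this a), Finset.sum_const, Finset.card_univ,
      Fintype.card_fin, nsmul_eq_mul]
  have hT : ∑ a : Fin n, ∑ b : Fin n, Dv (π * Equiv.swap a b)
      = (n:ℝ)^2 * Dv π - 2 * (n:ℝ) * Dv π := by
    have e1 : ∀ a b : Fin n, Dv (π * Equiv.swap a b)
        = Dv π + (cc n a * fv π b + cc n b * fv π a - cc n a * fv π a - cc n b * fv π b) := by
      intro a b; rw [Dv_mul_swap]; ring
    simp only [e1]
    have split : ∑ a : Fin n, ∑ b : Fin n,
        (Dv π + (cc n a * fv π b + cc n b * fv π a - cc n a * fv π a - cc n b * fv π b))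
        = (∑ _a : Fin n, ∑ _b : Fin n, Dv π)
          + ((∑ a : Fin n, ∑ b : Fin n, cc n a * fv π b)
            + (∑ a : Fin n, ∑ b : Fin n, cc n b * fv π a)
            - (∑ a : Fin n, ∑ b : Fin n, cc n a * fv π a)
            - (∑ a : Fin n, ∑ b : Fin n, cc n b * fv π b)) := by
      simp only [Finset.sum_add_distrib, Finset.sum_sub_distrib]
    rw [split]
    have t1 : (∑ _a : Fin n, ∑ _b : Fin n, Dv π) = (n:ℝ)^2 * Dv π := by
      simp [Finset.sum_const, Finset.card_univ]; ring
    have t2 : (∑ a : Fin n, ∑ b : Fin n, cc n a * fv π b) = 0 := by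
      rw [← Finset.sum_mul_sum]
      rw [sum_cc]; ring
    have t3 : (∑ a : Fin n, ∑ b : Fin n, cc n b * fv π a) = 0 := by
      have : ∀ a : Fin n, ∑ b : Fin n, cc n b * fv π a = (∑ b : Fin n, cc n b) * fv π a :=
        fun a => (Finset.sum_mul _ _ _).symm
      simp only [this, sum_cc, zero_mul, Finset.sum_const_zero]
    have t4 : (∑ a : Fin n, ∑ _b : Fin n, cc n a * fv π a) = (n:ℝ) * Dv π := by
      simp only [Finset.sum_const, Finset.card_univ, Fintype.card_fin, nsmul_eq_mul]
      rw [← Finset.mul_sum, ← Dv_eq]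
    have t5 : (∑ _a : Fin n, ∑ b : Fin n, cc n b * fv π b) = (n:ℝ) * Dv π := by
      rw [← Dv_eq]
      simp [Finset.sum_const, Finset.card_univ]
    rw [t1, t2, t3, t4, t5]
    ring
  linear_combination ((1:ℝ)/2) * hT - ((1:ℝ)/2) * hsym - ((1:ℝ)/2) * hdiag

lemma ind_flip {u v : Fin n} (h : u ≠ v) :
    (if u < v then (1:ℝ) else 0) = 1 - (if v < u then (1:ℝ) else 0) := by
  rcases h.lt_or_gt with h' | h'
  · simp [h', h'.not_gt, asymm h']
  · simp [h', h'.not_gt]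

lemma perpair (hn : 2 ≤ n) (π : Equiv.Perm (Fin n)) {p q : Fin n} (hpq : p < q) :
    ∑ ab ∈ Pairs n,
      (if π (Equiv.swap ab.1 ab.2 q) < π (Equiv.swap ab.1 ab.2 p) then (1:ℝ) else 0)
    = ((n:ℝ)^2 - 5*(n:ℝ))/2 * (if π q < π p then (1:ℝ) else 0)
      + (n:ℝ) + fv π p - fv π q := by
  have hpq' : p ≠ q := ne_of_lt hpq
  have hπpq : π p ≠ π q := fun h => hpq' (π.injective h)
  set X : Fin n → Fin n → ℝ :=
    fun a b => if π (Equiv.swap a b q) < π (Equiv.swap a b p) then (1:ℝ) else 0 with hXdef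
  set g : ℝ := if π q < π p then (1:ℝ) else 0 with hgdef
  have hX : ∀ a b, X a b = X b a := by
    intro a b; simp only [hXdef, Equiv.swap_comm]
  have hsym := sym_sum X hX
  have hdiag : ∑ a : Fin n, X a a = (n:ℝ) * g := by
    have : ∀ a : Fin n, X a a = g := by
      intro a; simp only [hXdef, Equiv.swap_self, Equiv.refl_apply, hgdef]
    rw [Finset.sum_congr rfl (fun a _ => this a), Finset.sum_const, Finset.card_univ,
      Fintype.card_fin, nsmul_eq_mul]
  -- sums of indicators over the whole universe
  have hiq : ∑ b : Fin n, (if π q < π b then (1:ℝ) else 0) = (n:ℝ) - 1 - fv π q := by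
    rw [Equiv.sum_comp π (fun v => if π q < v then (1:ℝ) else 0)]
    exact sum_ind_gt (π q)
  have hip : ∑ b : Fin n, (if π b < π p then (1:ℝ) else 0) = fv π p := by
    rw [Equiv.sum_comp π (fun v => if v < π p then (1:ℝ) else 0)]
    exact sum_ind_lt (π p)
  have hcard : (((Finset.univ : Finset (Fin n)) \ {p, q}).card : ℝ) = (n:ℝ) - 2 := by
    rw [Finset.card_sdiff_of_subset (Finset.subset_univ _), Finset.card_univ, Fintype.card_fin]
    have h2 : ({p, q} : Finset (Fin n)).card = 2 := by
      rw [Finset.card_insert_of_notMem (by simp [hpq']), Finset.card_singleton]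
    rw [h2, Nat.cast_sub hn]
    norm_num
  -- row p
  have hp : ∑ b : Fin n, X p b = ((n:ℝ) - 1 - fv π q) + 1 - g := by
    rw [← Finset.add_sum_erase Finset.univ (fun b => X p b) (Finset.mem_univ q)]
    have h1 : X p q = 1 - g := by
      simp only [hXdef, Equiv.swap_apply_right, Equiv.swap_apply_left]
      rw [hgdef]; exact ind_flip hπpq
    have h2 : ∑ b ∈ Finset.univ.erase q, X p b
        = ∑ b ∈ Finset.univ.erase q, (if π q < π b then (1:ℝ) else 0) := by
      refine Finset.sum_congr rfl fun b hb => ?_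
      have hbq : b ≠ q := Finset.ne_of_mem_erase hb
      rcases eq_or_ne b p with rfl | hbp
      · simp only [hXdef, Equiv.swap_self, Equiv.refl_apply]
      · simp only [hXdef, Equiv.swap_apply_of_ne_of_ne (Ne.symm hpq') (Ne.symm hbq),
          Equiv.swap_apply_left]
    have h3 : ∑ b ∈ Finset.univ.erase q, (if π q < π b then (1:ℝ) else 0)
        = (n:ℝ) - 1 - fv π q := by
      have := Finset.add_sum_erase Finset.univ
        (fun b => if π q < π b then (1:ℝ) else 0) (Finset.mem_univ q)
      simp only [lt_self_iff_false, if_false, zero_add] at this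
      rw [this, hiq]
    rw [h1, h2, h3]; ring
  -- row q
  have hq : ∑ b : Fin n, X q b = fv π p + 1 - g := by
    rw [← Finset.add_sum_erase Finset.univ (fun b => X q b) (Finset.mem_univ p)]
    have h1 : X q p = 1 - g := by
      simp only [hXdef, Equiv.swap_apply_right, Equiv.swap_apply_left]
      rw [hgdef]; exact ind_flip hπpq
    have h2 : ∑ b ∈ Finset.univ.erase p, X q b
        = ∑ b ∈ Finset.univ.erase p, (if π b < π p then (1:ℝ) else 0) := by
      refine Finset.sum_congr rfl fun b hb => ?_
      have hbp : b ≠ p := Finset.ne_of_mem_erase hb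
      rcases eq_or_ne b q with rfl | hbq
      · simp only [hXdef, Equiv.swap_self, Equiv.refl_apply]
      · simp only [hXdef, Equiv.swap_apply_left,
          Equiv.swap_apply_of_ne_of_ne hpq' (Ne.symm hbp)]
    have h3 : ∑ b ∈ Finset.univ.erase p, (if π b < π p then (1:ℝ) else 0) = fv π p := by
      have := Finset.add_sum_erase Finset.univ
        (fun b => if π b < π p then (1:ℝ) else 0) (Finset.mem_univ p)
      simp only [lt_self_iff_false, if_false, zero_add] at this
      rw [this, hip]
    rw [h1, h2, h3]; ring
  -- rows in the rest
  have hrow : ∀ a ∈ (Finset.univ : Finset (Fin n)) \ {p, q},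
      ∑ b : Fin n, X a b = ((n:ℝ) - 2) * g
        + ((if π q < π a then (1:ℝ) else 0) + (if π a < π p then (1:ℝ) else 0)) := by
    intro a ha
    simp only [Finset.mem_sdiff, Finset.mem_univ, true_and, Finset.mem_insert,
      Finset.mem_singleton, not_or] at ha
    obtain ⟨hap, haq⟩ := ha
    rw [sum_split_two hpq' (f := fun b => X a b)]
    have h1 : X a p = (if π q < π a then (1:ℝ) else 0) := by
      simp only [hXdef, Equiv.swap_apply_right,
        Equiv.swap_apply_of_ne_of_ne (Ne.symm haq) (Ne.symm hpq')]
    have h2 : X a q = (if π a < π p then (1:ℝ) else 0) := by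
      simp only [hXdef, Equiv.swap_apply_right,
        Equiv.swap_apply_of_ne_of_ne (Ne.symm hap) hpq']
    have h3 : ∑ b ∈ Finset.univ \ {p, q}, X a b = ((n:ℝ) - 2) * g := by
      have hc : ∀ b ∈ (Finset.univ : Finset (Fin n)) \ {p, q}, X a b = g := by
        intro b hb
        simp only [Finset.mem_sdiff, Finset.mem_univ, true_and, Finset.mem_insert,
          Finset.mem_singleton, not_or] at hb
        obtain ⟨hbp, hbq⟩ := hb
        simp only [hXdef, hgdef,
          Equiv.swap_apply_of_ne_of_ne (Ne.symm haq) (Ne.symm hbq),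
          Equiv.swap_apply_of_ne_of_ne (Ne.symm hap) (Ne.symm hbp)]
      rw [Finset.sum_congr rfl hc, Finset.sum_const, nsmul_eq_mul, hcard]
    rw [h1, h2, h3]; ring
  have e1 : ∑ a ∈ (Finset.univ : Finset (Fin n)) \ {p, q}, (if π q < π a then (1:ℝ) else 0)
      = ((n:ℝ) - 1 - fv π q) - g := by
    have hs := sum_split_two hpq' (f := fun a => if π q < π a then (1:ℝ) else 0)
    rw [hiq] at hs
    simp only [if_neg (lt_irrefl (π q))] at hs
    rw [← hgdef] at hs
    linarith
  have e2 : ∑ a ∈ (Finset.univ : Finset (Fin n)) \ {p, q}, (if π a < π p then (1:ℝ) else 0)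
      = fv π p - g := by
    have hs := sum_split_two hpq' (f := fun a => if π a < π p then (1:ℝ) else 0)
    rw [hip] at hs
    simp only [if_neg (lt_irrefl (π p))] at hs
    rw [← hgdef] at hs
    linarith
  have hRsum : ∑ a ∈ (Finset.univ : Finset (Fin n)) \ {p, q}, ∑ b : Fin n, X a b
      = ((n:ℝ) - 2) * (((n:ℝ) - 2) * g)
        + ((((n:ℝ) - 1 - fv π q) - g) + (fv π p - g)) := by
    rw [Finset.sum_congr rfl hrow, Finset.sum_add_distrib, Finset.sum_add_distrib,
      Finset.sum_const, nsmul_eq_mul, hcard, e1, e2]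
  have hT : ∑ a : Fin n, ∑ b : Fin n, X a b
      = (((n:ℝ) - 1 - fv π q) + 1 - g) + (fv π p + 1 - g)
        + (((n:ℝ) - 2) * (((n:ℝ) - 2) * g)
          + ((((n:ℝ) - 1 - fv π q) - g) + (fv π p - g))) := by
    rw [sum_split_two hpq' (f := fun a => ∑ b : Fin n, X a b), hp, hq, hRsum]
  have hgoal : ∑ ab ∈ Pairs n,
      (if π (Equiv.swap ab.1 ab.2 q) < π (Equiv.swap ab.1 ab.2 p) then (1:ℝ) else 0)
      = ∑ ab ∈ Pairs n, X ab.1 ab.2 := rfl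
  rw [hgoal]
  linear_combination ((1:ℝ)/2) * hT - ((1:ℝ)/2) * hsym - ((1:ℝ)/2) * hdiag

lemma L2 (hn : 2 ≤ n) (π : Equiv.Perm (Fin n)) :
    ∑ τ ∈ Sw n, Iv (π * τ)
      = ((n:ℝ)^2 - 5*(n:ℝ))/2 * Iv π + (n:ℝ) * ((n:ℝ) * ((n:ℝ) - 1) / 2) + Dv π := by
  rw [sum_Sw (fun τ => Iv (π * τ))]
  unfold Iv
  simp only [Equiv.Perm.mul_apply]
  rw [Finset.sum_comm]
  have key : ∀ pq ∈ Pairs n,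
      (∑ ab ∈ Pairs n,
        (if π (Equiv.swap ab.1 ab.2 pq.2) < π (Equiv.swap ab.1 ab.2 pq.1) then (1:ℝ) else 0))
      = ((n:ℝ)^2 - 5*(n:ℝ))/2 * (if π pq.2 < π pq.1 then (1:ℝ) else 0)
        + (n:ℝ) + fv π pq.1 - fv π pq.2 := by
    intro pq hpq
    simp only [Pairs, Finset.mem_filter, Finset.mem_univ, true_and] at hpq
    exact perpair hn π hpq
  refine (Finset.sum_congr rfl key).trans ?_
  simp only [Finset.sum_sub_distrib, Finset.sum_add_distrib, ← Finset.mul_sum,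
    Finset.sum_const, nsmul_eq_mul]
  rw [card_Pairs]
  unfold Dv
  rw [Finset.sum_sub_distrib]
  ring


lemma Iv_one : Iv (1 : Equiv.Perm (Fin n)) = 0 := by
  unfold Iv
  refine Finset.sum_eq_zero fun p hp => ?_
  simp only [Pairs, Finset.mem_filter, Finset.mem_univ, true_and] at hp
  simp [Equiv.Perm.one_apply, asymm hp]

lemma Dv_one : Dv (1 : Equiv.Perm (Fin n)) = -((n:ℝ) * ((n:ℝ)^2 - 1) / 6) := by
  unfold Dv
  rw [pair_sum_eq (fv (1 : Equiv.Perm (Fin n)))]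
  have : ∀ p : Fin n, cc n p * fv 1 p
      = ((n:ℝ) - 1) * ((p:ℕ):ℝ) - 2 * ((p:ℕ):ℝ)^2 := by
    intro p
    unfold cc fv
    simp [Equiv.Perm.one_apply]
    ring
  rw [Finset.sum_congr rfl (fun p _ => this p), Finset.sum_sub_distrib, ← Finset.mul_sum,
    ← Finset.mul_sum, sum_fin_cast, sum_fin_sq_cast]
  ring

lemma isSwap_conj (π σ : Equiv.Perm (Fin n)) (h : σ.IsSwap) : (π⁻¹ * σ * π).IsSwap := by
  obtain ⟨x, y, hxy, rfl⟩ := h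
  refine ⟨π⁻¹ x, π⁻¹ y, fun hh => hxy (π⁻¹.injective hh), ?_⟩
  rw [Equiv.swap_apply_apply, inv_inv]

lemma conj_sum (π : Equiv.Perm (Fin n)) (F : Equiv.Perm (Fin n) → ℝ) :
    ∑ τ ∈ Sw n, F (τ * π) = ∑ τ ∈ Sw n, F (π * τ) := by
  refine Finset.sum_nbij' (fun τ => π⁻¹ * τ * π) (fun τ => π * τ * π⁻¹) ?_ ?_ ?_ ?_ ?_
  · intro τ hτ
    simp only [Sw, Finset.mem_filter, Finset.mem_univ, true_and] at hτ ⊢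
    exact isSwap_conj π τ hτ
  · intro τ hτ
    simp only [Sw, Finset.mem_filter, Finset.mem_univ, true_and] at hτ ⊢
    have := isSwap_conj π⁻¹ τ hτ
    rwa [inv_inv] at this
  · intro τ _; group
  · intro τ _; group
  · intro τ _; congr 1; group

noncomputable def VS (n t : ℕ) : Finset (Fin t → Equiv.Perm (Fin n)) :=
  Finset.univ.filter (fun f => ∀ i, (f i).IsSwap)

noncomputable def SumF (n t : ℕ) (F : Equiv.Perm (Fin n) → ℝ) : ℝ :=
  ∑ f ∈ VS n t, F ((List.ofFn f).prod)

lemma SumF_zero (F : Equiv.Perm (Fin n) → ℝ) : SumF n 0 F = F 1 := by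
  unfold SumF VS
  rw [Finset.filter_true_of_mem (fun f _ => fun i => i.elim0)]
  have h1 : ∀ f : Fin 0 → Equiv.Perm (Fin n), (List.ofFn f).prod = 1 := by
    intro f; simp
  rw [Finset.sum_congr rfl (fun f _ => by rw [h1 f]), Finset.sum_const, Finset.card_univ]
  simp

lemma SumF_succ {t : ℕ} (F : Equiv.Perm (Fin n) → ℝ) :
    SumF n (t+1) F = ∑ g ∈ VS n t, ∑ τ ∈ Sw n, F (τ * (List.ofFn g).prod) := by
  unfold SumF
  rw [← Finset.sum_product']
  refine Finset.sum_nbij' (fun f => (fun j => f j.succ, f 0))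
    (fun p => Fin.cons p.2 p.1) ?_ ?_ ?_ ?_ ?_
  · intro f hf
    simp only [VS, Sw, Finset.mem_filter, Finset.mem_univ, true_and, Finset.mem_product] at hf ⊢
    exact ⟨fun j => hf j.succ, hf 0⟩
  · intro p hp
    simp only [VS, Sw, Finset.mem_filter, Finset.mem_univ, true_and, Finset.mem_product] at hp ⊢
    intro i
    refine Fin.cases ?_ ?_ i
    · simpa [Fin.cons_zero] using hp.2
    · intro j; simpa [Fin.cons_succ] using hp.1 j
  · intro f _
    exact Fin.cons_self_tail f
  · intro p _
    ext j
    · simp [Fin.cons_succ]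
    · simp [Fin.cons_zero]
  · intro f _
    rw [List.ofFn_succ, List.prod_cons]

lemma card_VS (t : ℕ) : (((VS n t)).card : ℝ) = ((n:ℝ) * ((n:ℝ) - 1) / 2) ^ t := by
  have h : VS n t = Fintype.piFinset (fun _ : Fin t => Sw n) := by
    ext f; simp [VS, Sw, Fintype.mem_piFinset]
  rw [h, Fintype.card_piFinset]
  rw [Finset.prod_const, Finset.card_univ, Fintype.card_fin, Nat.cast_pow, card_Sw]

lemma D_closed (t : ℕ) :
    SumF n t Dv = -((n:ℝ) * ((n:ℝ)^2 - 1) / 6) * ((n:ℝ) * ((n:ℝ) - 3) / 2) ^ t := by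
  induction t with
  | zero => rw [SumF_zero, Dv_one]; ring
  | succ k ih =>
    rw [SumF_succ]
    have h1 : ∀ g ∈ VS n k, ∑ τ ∈ Sw n, Dv (τ * (List.ofFn g).prod)
        = ((n:ℝ) * ((n:ℝ) - 3) / 2) * Dv ((List.ofFn g).prod) := by
      intro g _
      rw [conj_sum ((List.ofFn g).prod) Dv, L1]
    rw [Finset.sum_congr rfl h1, ← Finset.mul_sum]
    have : ∑ g ∈ VS n k, Dv ((List.ofFn g).prod) = SumF n k Dv := rfl
    rw [this, ih, pow_succ]
    ring

lemma A_closed (hn : 2 ≤ n) (t : ℕ) :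
    SumF n t Iv = ((n:ℝ) * ((n:ℝ) - 1) / 4) * ((n:ℝ) * ((n:ℝ) - 1) / 2) ^ t
      + (-(((n:ℝ) + 1) * ((n:ℝ) - 1) / 6)) * ((n:ℝ) * ((n:ℝ) - 3) / 2) ^ t
      + (-(((n:ℝ) - 1) * ((n:ℝ) - 2) / 12)) * (((n:ℝ)^2 - 5*(n:ℝ)) / 2) ^ t := by
  induction t with
  | zero => rw [SumF_zero, Iv_one]; ring
  | succ k ih =>
    rw [SumF_succ]
    have h1 : ∀ g ∈ VS n k, ∑ τ ∈ Sw n, Iv (τ * (List.ofFn g).prod)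
        = ((n:ℝ)^2 - 5*(n:ℝ))/2 * Iv ((List.ofFn g).prod)
          + (n:ℝ) * ((n:ℝ) * ((n:ℝ) - 1) / 2) + Dv ((List.ofFn g).prod) := by
      intro g _
      rw [conj_sum ((List.ofFn g).prod) Iv, L2 hn]
    rw [Finset.sum_congr rfl h1]
    simp only [Finset.sum_add_distrib, ← Finset.mul_sum, Finset.sum_const, nsmul_eq_mul]
    have e1 : ∑ g ∈ VS n k, Iv ((List.ofFn g).prod) = SumF n k Iv := rfl
    have e2 : ∑ g ∈ VS n k, Dv ((List.ofFn g).prod) = SumF n k Dv := rfl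
    rw [e1, e2, ih, D_closed, card_VS]
    simp only [pow_succ]
    ring

lemma inv_cast (π : Equiv.Perm (Fin n)) : ((invCount n π : ℕ) : ℝ) = Iv π := by
  unfold invCount Iv
  rw [Finset.sum_boole]
  congr 1
  have : Finset.filter (fun pp => π pp.2 < π pp.1) (Pairs n)
      = Finset.univ.filter (fun pp : Fin n × Fin n => pp.1 < pp.2 ∧ π pp.2 < π pp.1) := by
    ext pp; simp [Pairs, and_comm]
  rw [this]


end RT

theorem expected_inversions_random_transpositions (n t : ℕ) (hn : 2 ≤ n) :
    expInv n t =
      (n : ℝ) * (n - 1) / 4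
      - (n + 1) * (n - 1) / 6 * (1 - 2 / ((n : ℝ) - 1)) ^ t
      - (n - 1) * (n - 2) / 12 * (1 - 4 / ((n : ℝ) - 1)) ^ t := by
  have h2 : (2:ℝ) ≤ (n:ℝ) := by exact_mod_cast hn
  have hn0 : (n:ℝ) ≠ 0 := by linarith
  have hn1 : (n:ℝ) - 1 ≠ 0 := by linarith
  have hNr : (n:ℝ) * ((n:ℝ) - 1) / 2 ≠ 0 := by
    apply ne_of_gt; nlinarith
  unfold expInv
  have hnum : (∑ f ∈ Finset.univ.filter
        (fun f : Fin t → Equiv.Perm (Fin n) => ∀ i, (f i).IsSwap),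
      (invCount n (List.ofFn f).prod : ℝ)) = RT.SumF n t RT.Iv := by
    refine Finset.sum_congr rfl fun f _ => RT.inv_cast _
  have hden : ((Finset.univ.filter (fun σ : Equiv.Perm (Fin n) => σ.IsSwap)).card : ℝ)
      = (n:ℝ) * ((n:ℝ) - 1) / 2 := RT.card_Sw
  rw [hnum, hden, RT.A_closed hn]
  have hl1 : 1 - 2 / ((n:ℝ) - 1) = ((n:ℝ) * ((n:ℝ) - 3) / 2) / ((n:ℝ) * ((n:ℝ) - 1) / 2) := by
    field_simp
    ring
  have hl2 : 1 - 4 / ((n:ℝ) - 1) = (((n:ℝ)^2 - 5*(n:ℝ)) / 2) / ((n:ℝ) * ((n:ℝ) - 1) / 2) := by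
    field_simp
    ring
  rw [hl1, hl2, div_pow (((n:ℝ) * ((n:ℝ) - 3) / 2)) ((n:ℝ) * ((n:ℝ) - 1) / 2),
    div_pow (((n:ℝ)^2 - 5*(n:ℝ)) / 2) ((n:ℝ) * ((n:ℝ) - 1) / 2)]
  have hNrt : ((n:ℝ) * ((n:ℝ) - 1) / 2) ^ t ≠ 0 := pow_ne_zero _ hNr
  field_simp
  ring
end

section
/- For n ≥ 2, t ≥ 0, and 1 ≤ i < j ≤ n, if π is a product of t independent uniformly random transpositions in S_n, then P(π(i) > π(j)) = 1/2 - ((j-i)/n)(1 - 2/(n-1))^t + ((j-i)/n - 1/2)(1 - 4/(n-1))^t. -/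
open Classical Equiv Finset

lemma isSwap_eq_swap_of_moves {α : Type*} [DecidableEq α] {τ : Equiv.Perm α} {a : α}
    (h : τ.IsSwap) (ha : τ a ≠ a) : τ = Equiv.swap a (τ a) := by
  obtain ⟨x, y, hxy, rfl⟩ := h
  rcases eq_or_ne a x with rfl | hax
  · rw [swap_apply_left, swap_comm]
  rcases eq_or_ne a y with rfl | hay
  · rw [swap_apply_right, swap_comm]
  · exact absurd (swap_apply_of_ne_of_ne hax hay) ha

lemma isSwap_eq_swap_of_moves_two {α : Type*} [DecidableEq α] {τ : Equiv.Perm α} {a b : α}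
    (h : τ.IsSwap) (hab : a ≠ b) (ha : τ a ≠ a) (hb : τ b ≠ b) : τ = Equiv.swap a b := by
  have h1 := isSwap_eq_swap_of_moves h ha
  have hba : τ a = b := by
    by_contra hne
    exact hb (h1 ▸ swap_apply_of_ne_of_ne (Ne.symm hab) (Ne.symm hne))
  rw [h1, hba]

variable (n : ℕ)

noncomputable def SW : Finset (Equiv.Perm (Fin n)) := Finset.univ.filter (fun σ => σ.IsSwap)

def LTP : Finset (Fin n × Fin n) := Finset.univ.filter (fun p => p.1 < p.2)

lemma card_LT_eq : (LTP n).card = (SW n).card := by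
  apply Finset.card_bij (fun p _ => Equiv.swap p.1 p.2)
  · intro p hp
    simp only [LTP, mem_filter] at hp
    simp only [SW, mem_filter, mem_univ, true_and]
    exact ⟨p.1, p.2, ne_of_lt hp.2, rfl⟩
  · intro p hp q hq heq
    simp only [LTP, mem_filter] at hp hq
    have hmove : ∀ r : Fin n × Fin n, r.1 < r.2 → Equiv.swap p.1 p.2 = Equiv.swap r.1 r.2 →
        r.1 = p.1 ∨ r.1 = p.2 := by
      intro r hr he
      by_contra hc
      push_neg at hc
      have := Equiv.swap_apply_of_ne_of_ne hc.1 hc.2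
      rw [he, Equiv.swap_apply_left] at this
      exact absurd this (ne_of_gt hr)
    have hmove2 : ∀ r : Fin n × Fin n, r.1 < r.2 → Equiv.swap p.1 p.2 = Equiv.swap r.1 r.2 →
        r.2 = p.1 ∨ r.2 = p.2 := by
      intro r hr he
      by_contra hc
      push_neg at hc
      have := Equiv.swap_apply_of_ne_of_ne hc.1 hc.2
      rw [he, Equiv.swap_apply_right] at this
      exact absurd this (ne_of_lt hr)
    have h1 := hmove q hq.2 heq
    have h2 := hmove2 q hq.2 heq
    have hq1 : q.1 = p.1 := by
      rcases h1 with h | h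
      · exact h
      · rcases h2 with h' | h'
        · exact absurd (h' ▸ h ▸ hq.2) (not_lt.2 (le_of_lt hp.2))
        · exact absurd (h' ▸ h ▸ hq.2) (lt_irrefl _)
    have hq2 : q.2 = p.2 := by
      rcases h2 with h | h
      · exact absurd (h ▸ hq1 ▸ hq.2) (lt_irrefl _)
      · exact h
    exact Prod.ext hq1.symm hq2.symm
  · intro τ hτ
    simp only [SW, mem_filter, mem_univ, true_and] at hτ
    obtain ⟨x, y, hxy, rfl⟩ := hτ
    rcases lt_or_gt_of_ne hxy with h | h
    · exact ⟨(x, y), by simp [LTP, h], rfl⟩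
    · exact ⟨(y, x), by simp [LTP, h], (Equiv.swap_comm x y).symm⟩

lemma two_mul_card_SW : 2 * (SW n).card = n * n - n := by
  have hgt : (Finset.univ.filter (fun p : Fin n × Fin n => p.2 < p.1)).card = (LTP n).card := by
    apply Finset.card_bij (fun p _ => p.swap)
    · intro p hp
      simp only [mem_filter, mem_univ, true_and] at hp ⊢
      simpa [LTP]
    · intro p _ q _ h
      exact Prod.swap_injective h
    · intro p hp
      simp only [LTP, mem_filter, mem_univ, true_and] at hp
      exact ⟨p.swap, by simpa, by simp⟩
  have hsplit : (Finset.univ.filter (fun p : Fin n × Fin n => p.1 ≠ p.2)).card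
      = (LTP n).card + (Finset.univ.filter (fun p : Fin n × Fin n => p.2 < p.1)).card := by
    simp only [LTP]
    rw [← Finset.card_union_of_disjoint, ← Finset.filter_or]
    · congr 1
      apply Finset.filter_congr
      intro p _
      exact ne_iff_lt_or_gt
    · simp only [LTP, Finset.disjoint_filter]
      intro p _ h1 h2
      exact absurd (h1.trans h2) (lt_irrefl _)
  have hoff : (Finset.univ.filter (fun p : Fin n × Fin n => p.1 ≠ p.2))
      = (Finset.univ : Finset (Fin n)).offDiag := by
    ext p
    simp [Finset.mem_offDiag]
  have hcard : (Finset.univ.filter (fun p : Fin n × Fin n => p.1 ≠ p.2)).card = n * n - n := by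
    rw [hoff, Finset.offDiag_card]
    simp
  rw [← card_LT_eq, two_mul, ← hcard, hsplit, hgt]

variable {n}

lemma sum_SW_split (a b : Fin n) (hab : a ≠ b) (f : Equiv.Perm (Fin n) → ℝ) :
    ∑ τ ∈ SW n, f τ =
      ∑ τ ∈ (SW n).filter (fun τ => τ a = a ∧ τ b = b), f τ
      + f (Equiv.swap a b)
      + ∑ c ∈ (Finset.univ.erase a).erase b, f (Equiv.swap a c)
      + ∑ c ∈ (Finset.univ.erase a).erase b, f (Equiv.swap b c) := by
  classical
  have e1 : (SW n).filter (fun τ => ¬τ a = a ∧ ¬τ b = b) = {Equiv.swap a b} := by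
    ext τ
    simp only [SW, Finset.mem_filter, Finset.mem_univ, true_and, Finset.mem_singleton]
    constructor
    · rintro ⟨hsw, ha, hb⟩
      exact isSwap_eq_swap_of_moves_two hsw hab ha hb
    · rintro rfl
      refine ⟨⟨a, b, hab, rfl⟩, ?_, ?_⟩
      · rw [Equiv.swap_apply_left]; exact hab.symm
      · rw [Equiv.swap_apply_right]; exact hab
  have e2 : ∑ τ ∈ (SW n).filter (fun τ => ¬τ a = a ∧ τ b = b), f τ
      = ∑ c ∈ (Finset.univ.erase a).erase b, f (Equiv.swap a c) := by
    apply Finset.sum_nbij' (fun τ => τ a) (fun c => Equiv.swap a c)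
    · intro τ hτ
      simp only [SW, Finset.mem_filter, Finset.mem_univ, true_and] at hτ
      obtain ⟨hsw, ha, hb⟩ := hτ
      refine Finset.mem_erase.2 ⟨?_, Finset.mem_erase.2 ⟨ha, Finset.mem_univ _⟩⟩
      intro h
      exact hab (τ.injective (h.trans hb.symm))
    · intro c hc
      simp only [Finset.mem_erase, Finset.mem_univ, and_true] at hc
      simp only [SW, Finset.mem_filter, Finset.mem_univ, true_and]
      refine ⟨⟨a, c, (Ne.symm hc.2), rfl⟩, ?_, ?_⟩
      · rw [Equiv.swap_apply_left]; exact hc.2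
      · exact Equiv.swap_apply_of_ne_of_ne hab.symm (Ne.symm hc.1)
    · intro τ hτ
      simp only [SW, Finset.mem_filter, Finset.mem_univ, true_and] at hτ
      exact (isSwap_eq_swap_of_moves hτ.1 hτ.2.1).symm
    · intro c hc
      exact Equiv.swap_apply_left a c
    · intro τ hτ
      simp only [SW, Finset.mem_filter, Finset.mem_univ, true_and] at hτ
      rw [isSwap_eq_swap_of_moves hτ.1 hτ.2.1, Equiv.swap_apply_left]
  have e3 : ∑ τ ∈ (SW n).filter (fun τ => τ a = a ∧ ¬ τ b = b), f τ
      = ∑ c ∈ (Finset.univ.erase a).erase b, f (Equiv.swap b c) := by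
    rw [Finset.erase_right_comm]
    apply Finset.sum_nbij' (fun τ => τ b) (fun c => Equiv.swap b c)
    · intro τ hτ
      simp only [SW, Finset.mem_filter, Finset.mem_univ, true_and] at hτ
      obtain ⟨hsw, ha, hb⟩ := hτ
      refine Finset.mem_erase.2 ⟨?_, Finset.mem_erase.2 ⟨hb, Finset.mem_univ _⟩⟩
      intro h
      exact hab (τ.injective (ha.trans h.symm))
    · intro c hc
      simp only [Finset.mem_erase, Finset.mem_univ, and_true] at hc
      simp only [SW, Finset.mem_filter, Finset.mem_univ, true_and]
      refine ⟨⟨b, c, (Ne.symm hc.2), rfl⟩, ?_, ?_⟩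
      · exact Equiv.swap_apply_of_ne_of_ne hab (Ne.symm hc.1)
      · rw [Equiv.swap_apply_left]; exact hc.2
    · intro τ hτ
      simp only [SW, Finset.mem_filter, Finset.mem_univ, true_and] at hτ
      exact (isSwap_eq_swap_of_moves hτ.1 hτ.2.2).symm
    · intro c hc
      exact Equiv.swap_apply_left b c
    · intro τ hτ
      simp only [SW, Finset.mem_filter, Finset.mem_univ, true_and] at hτ
      rw [isSwap_eq_swap_of_moves hτ.1 hτ.2.2, Equiv.swap_apply_left]
  rw [← Finset.sum_filter_add_sum_filter_not (SW n) (fun τ => τ a = a)]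
  rw [← Finset.sum_filter_add_sum_filter_not ((SW n).filter (fun τ => τ a = a)) (fun τ => τ b = b)]
  rw [← Finset.sum_filter_add_sum_filter_not ((SW n).filter (fun τ => ¬ τ a = a)) (fun τ => τ b = b)]
  rw [Finset.filter_filter, Finset.filter_filter, Finset.filter_filter, Finset.filter_filter]
  rw [e1, e2, e3, Finset.sum_singleton]
  ring

namespace SwapProb
open Finset

noncomputable def sgn (x y : Fin n) : ℝ := if x < y then 1 else -1

lemma sgn_symm {x y : Fin n} (h : x ≠ y) : sgn y x = - sgn x y := by
  rcases lt_or_gt_of_ne h with h' | h' <;>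
    simp [sgn, h', not_lt.2 (le_of_lt h'), lt_irrefl]

lemma card_D {a b : Fin n} (hab : a ≠ b) :
    ((Finset.univ.erase a).erase b).card = n - 2 := by
  rw [Finset.card_erase_of_mem, Finset.card_erase_of_mem (Finset.mem_univ a)]
  · simp only [Finset.card_univ, Fintype.card_fin]
    omega
  · exact Finset.mem_erase.2 ⟨hab.symm, Finset.mem_univ b⟩

lemma card_S0 (hn : 2 ≤ n) {a b : Fin n} (hab : a ≠ b) :
    (((SW n).filter (fun τ => τ a = a ∧ τ b = b)).card : ℝ)
      = ((SW n).card : ℝ) - (2 * n - 3) := by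
  have h := sum_SW_split a b hab (fun _ => (1:ℝ))
  simp only [Finset.sum_const, nsmul_eq_mul, mul_one] at h
  rw [card_D hab] at h
  have h2 : ((n - 2 : ℕ) : ℝ) = (n : ℝ) - 2 := by
    rw [Nat.cast_sub hn]; norm_num
  rw [h2] at h
  linarith

lemma sum_sgn_fst (hn : 2 ≤ n) (b : Fin n) :
    ∑ c ∈ Finset.univ.erase b, sgn c b = 2 * ((b : ℕ) : ℝ) - n + 1 := by
  have hsplit : Finset.univ.erase b = Finset.Iio b ∪ Finset.Ioi b := by
    ext c
    simp only [Finset.mem_erase, Finset.mem_univ, and_true, Finset.mem_union,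
      Finset.mem_Iio, Finset.mem_Ioi]
    exact ne_iff_lt_or_gt
  have hdisj : Disjoint (Finset.Iio b) (Finset.Ioi b) := by
    simp only [Finset.disjoint_left, Finset.mem_Iio, Finset.mem_Ioi]
    intro c h1 h2
    exact absurd (h1.trans h2) (lt_irrefl _)
  rw [hsplit, Finset.sum_union hdisj]
  have e1 : ∑ c ∈ Finset.Iio b, sgn c b = ((b : ℕ) : ℝ) := by
    have h1 : ∀ c ∈ Finset.Iio b, sgn c b = 1 := by
      intro c hc
      simp only [Finset.mem_Iio] at hc
      simp [sgn, hc]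
    rw [Finset.sum_congr rfl h1, Finset.sum_const, Fin.card_Iio, nsmul_eq_mul, mul_one]
  have e2 : ∑ c ∈ Finset.Ioi b, sgn c b = -(((n : ℝ) - 1) - (b : ℕ)) := by
    have h1 : ∀ c ∈ Finset.Ioi b, sgn c b = -1 := by
      intro c hc
      simp only [Finset.mem_Ioi] at hc
      simp [sgn, not_lt.2 (le_of_lt hc)]
    have hb : (b : ℕ) ≤ n - 1 := by omega
    have hcast : ((n - 1 - (b : ℕ) : ℕ) : ℝ) = (n : ℝ) - 1 - ((b:ℕ):ℝ) := by
      rw [Nat.cast_sub hb, Nat.cast_sub (by omega : 1 ≤ n)]; norm_num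
    rw [Finset.sum_congr rfl h1, Finset.sum_const, Fin.card_Ioi, nsmul_eq_mul, hcast]
    ring
  rw [e1, e2]; ring

lemma sum_sgn_snd (hn : 2 ≤ n) (a : Fin n) :
    ∑ c ∈ Finset.univ.erase a, sgn a c = (n : ℝ) - 1 - 2 * ((a : ℕ) : ℝ) := by
  have key : ∀ c ∈ Finset.univ.erase a, sgn a c = - sgn c a := by
    intro c hc
    simp only [Finset.mem_erase] at hc
    rw [sgn_symm hc.1]
  rw [Finset.sum_congr rfl key, Finset.sum_neg_distrib, sum_sgn_fst hn a]
  ring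

lemma swap_ne_fst {a c b : Fin n} (hba : b ≠ a) (hbc : b ≠ c) :
    Equiv.swap a c b = b := Equiv.swap_apply_of_ne_of_ne hba hbc

lemma sum_G (hn : 2 ≤ n) {a b : Fin n} (hab : a ≠ b) :
    ∑ τ ∈ SW n, (((τ b : ℕ) : ℝ) - ((τ a : ℕ) : ℝ))
      = (((SW n).card : ℝ) - n) * (((b : ℕ) : ℝ) - ((a : ℕ) : ℝ)) := by
  rw [sum_SW_split a b hab]
  have e0 : ∑ τ ∈ (SW n).filter (fun τ => τ a = a ∧ τ b = b),
      (((τ b : ℕ) : ℝ) - ((τ a : ℕ) : ℝ))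
      = (((SW n).card : ℝ) - (2 * n - 3)) * (((b : ℕ) : ℝ) - ((a : ℕ) : ℝ)) := by
    have h1 : ∀ τ ∈ (SW n).filter (fun τ => τ a = a ∧ τ b = b),
        (((τ b : ℕ) : ℝ) - ((τ a : ℕ) : ℝ)) = (((b : ℕ) : ℝ) - ((a : ℕ) : ℝ)) := by
      intro τ hτ
      simp only [Finset.mem_filter] at hτ
      rw [hτ.2.1, hτ.2.2]
    rw [Finset.sum_congr rfl h1, Finset.sum_const, nsmul_eq_mul, card_S0 hn hab]
  have e1 : (((Equiv.swap a b b : Fin n) : ℕ) : ℝ) - ((Equiv.swap a b a : ℕ) : ℝ)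
      = ((a : ℕ) : ℝ) - ((b : ℕ) : ℝ) := by
    rw [Equiv.swap_apply_left, Equiv.swap_apply_right]
  have e2 : ∀ c ∈ (Finset.univ.erase a).erase b,
      (((Equiv.swap a c b : Fin n) : ℕ) : ℝ) - ((Equiv.swap a c a : ℕ) : ℝ)
      = ((b : ℕ) : ℝ) - ((c : ℕ) : ℝ) := by
    intro c hc
    simp only [Finset.mem_erase] at hc
    rw [Equiv.swap_apply_left, swap_ne_fst hab.symm (Ne.symm hc.1)]
  have e3 : ∀ c ∈ (Finset.univ.erase a).erase b,
      (((Equiv.swap b c b : Fin n) : ℕ) : ℝ) - ((Equiv.swap b c a : ℕ) : ℝ)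
      = ((c : ℕ) : ℝ) - ((a : ℕ) : ℝ) := by
    intro c hc
    simp only [Finset.mem_erase] at hc
    rw [Equiv.swap_apply_left, swap_ne_fst hab hc.2.1.symm]
  rw [e0, e1, Finset.sum_congr rfl e2, Finset.sum_congr rfl e3]
  rw [Finset.sum_sub_distrib, Finset.sum_sub_distrib, Finset.sum_const, Finset.sum_const,
    card_D hab, nsmul_eq_mul, nsmul_eq_mul]
  have hcast : ((n - 2 : ℕ) : ℝ) = (n : ℝ) - 2 := by
    rw [Nat.cast_sub hn]; norm_num
  rw [hcast]
  ring

lemma sum_sgn_SW (hn : 2 ≤ n) {a b : Fin n} (hab : a ≠ b) :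
    ∑ τ ∈ SW n, sgn (τ a) (τ b)
      = (((SW n).card : ℝ) - 2 * n) * sgn a b + 2 * (((b : ℕ) : ℝ) - ((a : ℕ) : ℝ)) := by
  rw [sum_SW_split a b hab]
  have e0 : ∑ τ ∈ (SW n).filter (fun τ => τ a = a ∧ τ b = b), sgn (τ a) (τ b)
      = (((SW n).card : ℝ) - (2 * n - 3)) * sgn a b := by
    have h1 : ∀ τ ∈ (SW n).filter (fun τ => τ a = a ∧ τ b = b),
        sgn (τ a) (τ b) = sgn a b := by
      intro τ hτ
      simp only [Finset.mem_filter] at hτ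
      rw [hτ.2.1, hτ.2.2]
    rw [Finset.sum_congr rfl h1, Finset.sum_const, nsmul_eq_mul, card_S0 hn hab]
  have e1 : sgn (Equiv.swap a b a) (Equiv.swap a b b) = - sgn a b := by
    rw [Equiv.swap_apply_left, Equiv.swap_apply_right, sgn_symm hab]
  have e2 : ∀ c ∈ (Finset.univ.erase a).erase b,
      sgn (Equiv.swap a c a) (Equiv.swap a c b) = sgn c b := by
    intro c hc
    simp only [Finset.mem_erase] at hc
    rw [Equiv.swap_apply_left, swap_ne_fst hab.symm (Ne.symm hc.1)]
  have e3 : ∀ c ∈ (Finset.univ.erase a).erase b,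
      sgn (Equiv.swap b c a) (Equiv.swap b c b) = sgn a c := by
    intro c hc
    simp only [Finset.mem_erase] at hc
    rw [Equiv.swap_apply_left, swap_ne_fst hab hc.2.1.symm]
  have e4 : ∑ c ∈ (Finset.univ.erase a).erase b, sgn c b
      = (2 * ((b : ℕ) : ℝ) - n + 1) - sgn a b := by
    rw [Finset.erase_right_comm]
    have := Finset.sum_erase_add ((Finset.univ : Finset (Fin n)).erase b)
      (fun c => sgn c b) (Finset.mem_erase.2 ⟨hab, Finset.mem_univ a⟩)
    rw [sum_sgn_fst hn b] at this
    linarith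
  have e5 : ∑ c ∈ (Finset.univ.erase a).erase b, sgn a c
      = ((n : ℝ) - 1 - 2 * ((a : ℕ) : ℝ)) - sgn a b := by
    have := Finset.sum_erase_add ((Finset.univ : Finset (Fin n)).erase a)
      (fun c => sgn a c) (Finset.mem_erase.2 ⟨hab.symm, Finset.mem_univ b⟩)
    rw [sum_sgn_snd hn a] at this
    linarith
  rw [e0, e1, Finset.sum_congr rfl e2, Finset.sum_congr rfl e3, e4, e5]
  ring

noncomputable def cnt (n t : ℕ) (a b : Fin n) : ℕ :=
  (Finset.univ.filter (fun f : Fin t → Equiv.Perm (Fin n) =>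
      (∀ k, (f k).IsSwap) ∧ (List.ofFn f).prod b < (List.ofFn f).prod a)).card

lemma cnt_zero (a b : Fin n) : cnt n 0 a b = if b < a then 1 else 0 := by
  classical
  rw [cnt]
  by_cases h : b < a
  · rw [if_pos h, Finset.filter_true_of_mem, Finset.card_univ]
    · simp
    · intro f _
      refine ⟨fun k => k.elim0, ?_⟩
      simp only [List.ofFn_zero, List.prod_nil]
      simpa using h
  · rw [if_neg h, Finset.filter_false_of_mem, Finset.card_empty]
    intro f _ hc
    apply h
    have := hc.2
    simpa using this

def snocEquiv (t : ℕ) (α : Type*) : ((Fin t → α) × α) ≃ (Fin (t + 1) → α) where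
  toFun p := Fin.snoc p.1 p.2
  invFun f := (Fin.init f, f (Fin.last t))
  left_inv p := by simp
  right_inv f := Fin.snoc_init_self f

lemma cnt_succ (t : ℕ) (a b : Fin n) :
    cnt n (t + 1) a b = ∑ τ ∈ SW n, cnt n t (τ a) (τ b) := by
  classical
  rw [cnt, Finset.card_filter]
  rw [← Equiv.sum_comp (snocEquiv t (Equiv.Perm (Fin n)))
    (fun f => if ((∀ k, (f k).IsSwap) ∧ (List.ofFn f).prod b < (List.ofFn f).prod a)
      then (1:ℕ) else 0)]
  rw [Fintype.sum_prod_type_right]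
  have key : ∀ τ : Equiv.Perm (Fin n), ∀ g : Fin t → Equiv.Perm (Fin n),
      (if ((∀ k, ((snocEquiv t _ (g, τ)) k).IsSwap)
          ∧ (List.ofFn (snocEquiv t _ (g, τ))).prod b < (List.ofFn (snocEquiv t _ (g, τ))).prod a)
        then (1:ℕ) else 0)
      = (if τ.IsSwap then
          (if ((∀ k, (g k).IsSwap) ∧ (List.ofFn g).prod (τ b) < (List.ofFn g).prod (τ a))
            then (1:ℕ) else 0) else 0) := by
    intro τ g
    have hsnoc : ∀ k : Fin t, (snocEquiv t (Equiv.Perm (Fin n)) (g, τ)) k.castSucc = g k := by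
      intro k; simp [snocEquiv]
    have hlast : (snocEquiv t (Equiv.Perm (Fin n)) (g, τ)) (Fin.last t) = τ := by
      simp [snocEquiv]
    have hprod : (List.ofFn (snocEquiv t (Equiv.Perm (Fin n)) (g, τ))).prod
        = (List.ofFn g).prod * τ := by
      rw [List.ofFn_succ']
      rw [List.prod_concat, hlast]
      congr 1
      exact congrArg List.prod (congrArg List.ofFn (funext hsnoc))
    have hall : (∀ k, ((snocEquiv t (Equiv.Perm (Fin n)) (g, τ)) k).IsSwap)
        ↔ (∀ k, (g k).IsSwap) ∧ τ.IsSwap := by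
      rw [Fin.forall_fin_succ']
      constructor
      · rintro ⟨h1, h2⟩
        exact ⟨fun k => hsnoc k ▸ h1 k, hlast ▸ h2⟩
      · rintro ⟨h1, h2⟩
        exact ⟨fun k => (hsnoc k).symm ▸ h1 k, hlast.symm ▸ h2⟩
    by_cases hτ : τ.IsSwap
    · rw [if_pos hτ]
      congr 1
      rw [eq_iff_iff]
      rw [hall, hprod]
      simp only [Equiv.Perm.mul_apply]
      tauto
    · rw [if_neg hτ, if_neg]
      rw [hall, hprod]
      tauto
  calc ∑ τ : Equiv.Perm (Fin n), ∑ g : Fin t → Equiv.Perm (Fin n),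
        (if ((∀ k, ((snocEquiv t _ (g, τ)) k).IsSwap)
          ∧ (List.ofFn (snocEquiv t _ (g, τ))).prod b < (List.ofFn (snocEquiv t _ (g, τ))).prod a)
        then (1:ℕ) else 0)
      = ∑ τ : Equiv.Perm (Fin n), (if τ.IsSwap then cnt n t (τ a) (τ b) else 0) := by
        apply Finset.sum_congr rfl
        intro τ _
        rw [Finset.sum_congr rfl (fun g _ => key τ g)]
        by_cases hτ : τ.IsSwap
        · simp only [if_pos hτ]
          rw [cnt, Finset.card_filter]
        · simp [hτ]
    _ = ∑ τ ∈ SW n, cnt n t (τ a) (τ b) := by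
        rw [SW, Finset.sum_filter]

lemma NL1 (hn : 2 ≤ n) : ((SW n).card : ℝ) * (1 - 2 / ((n : ℝ) - 1))
    = ((SW n).card : ℝ) - n := by
  have h := two_mul_card_SW n
  have h2 : 2 * ((SW n).card : ℝ) = (n : ℝ) * n - n := by
    have : ((n * n - n : ℕ) : ℝ) = (n : ℝ) * n - n := by
      rw [Nat.cast_sub (Nat.le_mul_of_pos_left n (by omega))]
      push_cast; ring
    rw [← this, ← h]
    push_cast; ring
  have hn1 : (n : ℝ) - 1 ≠ 0 := by
    have : (2:ℝ) ≤ n := by exact_mod_cast hn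
    linarith
  field_simp
  linear_combination -h2

lemma NL2 (hn : 2 ≤ n) : ((SW n).card : ℝ) * (1 - 4 / ((n : ℝ) - 1))
    = ((SW n).card : ℝ) - 2 * n := by
  have h := two_mul_card_SW n
  have h2 : 2 * ((SW n).card : ℝ) = (n : ℝ) * n - n := by
    have : ((n * n - n : ℕ) : ℝ) = (n : ℝ) * n - n := by
      rw [Nat.cast_sub (Nat.le_mul_of_pos_left n (by omega))]
      push_cast; ring
    rw [← this, ← h]
    push_cast; ring
  have hn1 : (n : ℝ) - 1 ≠ 0 := by
    have : (2:ℝ) ≤ n := by exact_mod_cast hn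
    linarith
  field_simp
  linear_combination -2 * h2

lemma cnt_formula (hn : 2 ≤ n) (t : ℕ) :
    ∀ a b : Fin n, a ≠ b →
    (cnt n t a b : ℝ) = (((SW n).card : ℝ)) ^ t *
      (1 / 2 - (((b : ℕ) : ℝ) - ((a : ℕ) : ℝ)) / n * (1 - 2 / ((n : ℝ) - 1)) ^ t
        + ((((b : ℕ) : ℝ) - ((a : ℕ) : ℝ)) / n - sgn a b / 2) * (1 - 4 / ((n : ℝ) - 1)) ^ t) := by
  induction t with
  | zero =>
    intro a b hab
    rw [cnt_zero]
    rcases lt_or_gt_of_ne hab with h | h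
    · rw [if_neg (not_lt.2 (le_of_lt h))]
      simp [sgn, h]
    · rw [if_pos h]
      simp only [sgn, if_neg (not_lt.2 (le_of_lt h))]
      ring
  | succ t IH =>
    intro a b hab
    rw [cnt_succ, Nat.cast_sum]
    set N : ℝ := ((SW n).card : ℝ) with hN
    set L1 : ℝ := 1 - 2 / ((n : ℝ) - 1) with hL1d
    set L2 : ℝ := 1 - 4 / ((n : ℝ) - 1) with hL2d
    have hstep : ∀ τ ∈ SW n, ((cnt n t (τ a) (τ b) : ℕ) : ℝ)
        = N ^ t / 2
          + ((L2 ^ t - L1 ^ t) * N ^ t / n) * (((τ b : ℕ) : ℝ) - ((τ a : ℕ) : ℝ))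
          + (-(L2 ^ t * N ^ t / 2)) * sgn (τ a) (τ b) := by
      intro τ _
      rw [IH (τ a) (τ b) (fun h => hab (τ.injective h))]
      ring
    rw [Finset.sum_congr rfl hstep]
    rw [Finset.sum_add_distrib, Finset.sum_add_distrib, Finset.sum_const,
      ← Finset.mul_sum, ← Finset.mul_sum, sum_G hn hab, sum_sgn_SW hn hab,
      nsmul_eq_mul]
    have h1 := NL1 hn
    have h2 := NL2 hn
    rw [← hN] at h1 h2
    rw [← hL1d] at h1
    rw [← hL2d] at h2
    set g : ℝ := (((b : ℕ) : ℝ) - ((a : ℕ) : ℝ))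
    set s : ℝ := sgn a b
    rw [pow_succ, pow_succ, pow_succ]
    have hninv : (n : ℝ) * ((n : ℝ))⁻¹ = 1 :=
      mul_inv_cancel₀ (by
      have : (0:ℝ) < n := by exact_mod_cast (by omega : 0 < n)
      exact this.ne')
    linear_combination ((g / n) * N ^ t * L1 ^ t) * h1
      - ((g / n - s / 2) * N ^ t * L2 ^ t) * h2
      + (N ^ t * g * L2 ^ t) * hninv

end SwapProb

/-- The probability that `π i > π j` where `π` is a product of `t` independent
uniformly random transpositions in the symmetric group `Sₙ`. -/
noncomputable def swapProbGt (n t : ℕ) (i j : Fin n) : ℝ :=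
  ((Finset.univ.filter (fun f : Fin t → Equiv.Perm (Fin n) =>
      (∀ k, (f k).IsSwap) ∧ (List.ofFn f).prod j < (List.ofFn f).prod i)).card : ℝ) /
    ((Finset.univ.filter (fun σ : Equiv.Perm (Fin n) => σ.IsSwap)).card : ℝ) ^ t

theorem prob_inversion_random_transpositions (n t : ℕ) (hn : 2 ≤ n)
    (i j : Fin n) (hij : i < j) :
    swapProbGt n t i j =
      1 / 2
      - (((j : ℕ) : ℝ) - (i : ℕ)) / n * (1 - 2 / ((n : ℝ) - 1)) ^ t
      + ((((j : ℕ) : ℝ) - (i : ℕ)) / n - 1 / 2) * (1 - 4 / ((n : ℝ) - 1)) ^ t := by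
  have hij' : i ≠ j := ne_of_lt hij
  have h := SwapProb.cnt_formula hn t i j hij'
  have hs : SwapProb.sgn i j = 1 := if_pos hij
  rw [hs] at h
  have hcardpos : (SW n).card ≠ 0 := by
    have h2 := two_mul_card_SW n
    have h4 : 2 * n ≤ n * n := Nat.mul_le_mul_right n hn
    omega
  have hcard : ((SW n).card : ℝ) ≠ 0 := Nat.cast_ne_zero.2 hcardpos
  have hnum : (Finset.univ.filter (fun f : Fin t → Equiv.Perm (Fin n) =>
      (∀ k, (f k).IsSwap) ∧ (List.ofFn f).prod j < (List.ofFn f).prod i)).card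
      = SwapProb.cnt n t i j := rfl
  have hden : (Finset.univ.filter (fun σ : Equiv.Perm (Fin n) => σ.IsSwap)).card
      = (SW n).card := rfl
  rw [swapProbGt, hnum, hden, h]
  rw [mul_comm, mul_div_assoc, div_self (pow_ne_zero t hcard), mul_one]
end

section
/- Fix n ≥ 2 and t ≥ 0, and let π be a product of t independent uniformly random transpositions in S_n. Then for 1 ≤ i < j ≤ n, the probability P(π(i) > π(j)) depends only on the difference j - i. -/
open Classical Finset Equiv


variable {n t : ℕ}

lemma prod_conj_list {G : Type*} [Group G] (σ : G) (l : List G) :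
    (l.map fun x => σ * x * σ⁻¹).prod = σ * l.prod * σ⁻¹ := by
  induction l with
  | nil => simp
  | cons a l ih => simp only [List.map_cons, List.prod_cons, ih]; group

lemma prod_conj {G : Type*} [Group G] (σ : G) (f : Fin t → G) :
    (List.ofFn (fun k => σ * f k * σ⁻¹)).prod = σ * (List.ofFn f).prod * σ⁻¹ := by
  rw [← prod_conj_list σ (List.ofFn f), List.map_ofFn]; rfl

lemma isSwap_conj {α : Type*} [DecidableEq α] (σ τ : Perm α) (h : τ.IsSwap) :
    (σ * τ * σ⁻¹).IsSwap := by
  obtain ⟨x, y, hxy, rfl⟩ := h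
  exact ⟨σ x, σ y, fun hc => hxy (σ.injective hc), (Equiv.swap_apply_apply σ x y).symm⟩

lemma conj_card (n t : ℕ) (σ : Perm (Fin n)) (Q : Perm (Fin n) → Prop) :
    (univ.filter fun f : Fin t → Perm (Fin n) =>
        (∀ k, (f k).IsSwap) ∧ Q ((List.ofFn f).prod)).card =
    (univ.filter fun f : Fin t → Perm (Fin n) =>
        (∀ k, (f k).IsSwap) ∧ Q (σ * (List.ofFn f).prod * σ⁻¹)).card := by
  apply Finset.card_bij' (fun f _ => fun k => σ⁻¹ * f k * σ) (fun f _ => fun k => σ * f k * σ⁻¹)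
  · intro f hf
    simp only [mem_filter, mem_univ, true_and] at hf ⊢
    refine ⟨fun k => ?_, ?_⟩
    · simpa using isSwap_conj σ⁻¹ (f k) (hf.1 k)
    · have h2 : (List.ofFn fun k => σ⁻¹ * f k * σ).prod
          = σ⁻¹ * (List.ofFn f).prod * σ := by simpa using prod_conj σ⁻¹ f
      have h3 : σ * (σ⁻¹ * (List.ofFn f).prod * σ) * σ⁻¹ = (List.ofFn f).prod := by group
      rw [h2, h3]; exact hf.2
  · intro f hf
    simp only [mem_filter, mem_univ, true_and] at hf ⊢
    refine ⟨fun k => isSwap_conj σ (f k) (hf.1 k), ?_⟩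
    rw [prod_conj]
    have h3 : σ * ((List.ofFn f).prod) * σ⁻¹ = σ * (List.ofFn f).prod * σ⁻¹ := rfl
    exact hf.2
  · intro f _; funext k; group
  · intro f _; funext k; group

lemma exists_perm_of_inj {α : Type*} [Fintype α] [DecidableEq α] {k : ℕ} (x y : Fin k → α)
    (hx : Function.Injective x) (hy : Function.Injective y) :
    ∃ σ : Perm α, ∀ m, σ (x m) = y m := by
  have hcx : Fintype.card {a // a ∈ Set.range x} = k := by
    refine (Fintype.card_congr (Equiv.refl _)).trans ?_
    rw [Set.card_range_of_injective hx, Fintype.card_fin]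
  have hcy : Fintype.card {a // a ∈ Set.range y} = k := by
    refine (Fintype.card_congr (Equiv.refl _)).trans ?_
    rw [Set.card_range_of_injective hy, Fintype.card_fin]
  have hcompl : Fintype.card {a // ¬ a ∈ Set.range x} = Fintype.card {a // ¬ a ∈ Set.range y} := by
    rw [Fintype.card_subtype_compl, Fintype.card_subtype_compl, hcx, hcy]
  have f : {a // ¬ a ∈ Set.range x} ≃ {a // ¬ a ∈ Set.range y} :=
    Fintype.equivOfCardEq hcompl
  refine ⟨Equiv.subtypeCongr ((Equiv.ofInjective x hx).symm.trans (Equiv.ofInjective y hy)) f,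
    fun m => ?_⟩
  have hm : x m ∈ Set.range x := ⟨m, rfl⟩
  have h1 : Equiv.subtypeCongr ((Equiv.ofInjective x hx).symm.trans (Equiv.ofInjective y hy)) f
      (x m) = ((((Equiv.ofInjective x hx).symm.trans (Equiv.ofInjective y hy)) ⟨x m, hm⟩ : {a // a ∈ Set.range y}) : α) := by
    simp [Equiv.subtypeCongr, hm]
  rw [h1, Equiv.trans_apply]
  have h2 : (Equiv.ofInjective x hx).symm ⟨x m, hm⟩ = m := by
    apply (Equiv.ofInjective x hx).injective; simp
  rw [h2]; simp

noncomputable def cnt (n t : ℕ) (Q : Perm (Fin n) → Prop) : ℕ :=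
  (univ.filter fun f : Fin t → Perm (Fin n) =>
      (∀ k, (f k).IsSwap) ∧ Q ((List.ofFn f).prod)).card

lemma cnt_congr (n t : ℕ) (Q Q' : Perm (Fin n) → Prop) (h : ∀ P, Q P ↔ Q' P) :
    cnt n t Q = cnt n t Q' := by
  unfold cnt; congr 1; ext f; simp [h]

lemma cnt_conj (n t : ℕ) (σ : Perm (Fin n)) (Q : Perm (Fin n) → Prop) :
    cnt n t Q = cnt n t (fun P => Q (σ * P * σ⁻¹)) := by
  unfold cnt
  apply Finset.card_bij' (fun f _ => fun k => σ⁻¹ * f k * σ) (fun f _ => fun k => σ * f k * σ⁻¹)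
  · intro f hf
    simp only [mem_filter, mem_univ, true_and] at hf ⊢
    refine ⟨fun k => ?_, ?_⟩
    · simpa using isSwap_conj σ⁻¹ (f k) (hf.1 k)
    · have h2 : (List.ofFn fun k => σ⁻¹ * f k * σ).prod
          = σ⁻¹ * (List.ofFn f).prod * σ := by simpa using prod_conj σ⁻¹ f
      have h3 : σ * (σ⁻¹ * (List.ofFn f).prod * σ) * σ⁻¹ = (List.ofFn f).prod := by group
      rw [h2, h3]; exact hf.2
  · intro f hf
    simp only [mem_filter, mem_univ, true_and] at hf ⊢
    exact ⟨fun k => isSwap_conj σ (f k) (hf.1 k), by rw [prod_conj]; exact hf.2⟩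
  · intro f _; funext k; group
  · intro f _; funext k; group

noncomputable def Ncnt (n t : ℕ) (i j b a : Fin n) : ℕ :=
  cnt n t (fun P => P i = b ∧ P j = a)

lemma Ncnt_conj (n t : ℕ) (σ : Perm (Fin n)) (i j b a : Fin n) :
    Ncnt n t i j b a = Ncnt n t (σ⁻¹ i) (σ⁻¹ j) (σ⁻¹ b) (σ⁻¹ a) := by
  unfold Ncnt
  rw [cnt_conj n t σ]
  apply cnt_congr
  intro P
  simp [Perm.mul_apply, Equiv.apply_eq_iff_eq_symm_apply, Equiv.Perm.inv_def]

lemma Ncnt_pattern (n t : ℕ) (i j b a i' j' b' a' : Fin n) (σ : Perm (Fin n))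
    (h1 : σ i' = i) (h2 : σ j' = j) (h3 : σ b' = b) (h4 : σ a' = a) :
    Ncnt n t i j b a = Ncnt n t i' j' b' a' := by
  rw [Ncnt_conj n t σ i j b a]
  congr 1 <;> simp [← h1, ← h2, ← h3, ← h4]

/-- the transposition identity: `N i j b a = N i j (swap i j a) (swap i j b)` -/
lemma Ncnt_swap (n t : ℕ) (i j b a : Fin n) :
    Ncnt n t i j b a = Ncnt n t i j (Equiv.swap i j a) (Equiv.swap i j b) := by
  have h := Ncnt_conj n t (Equiv.swap i j) i j b a
  simp only [Equiv.swap_inv] at h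
  rw [h, Equiv.swap_apply_left, Equiv.swap_apply_right]
  unfold Ncnt
  exact cnt_congr _ _ _ _ (fun P => by tauto)


-- helper: sum over sets with equal cards and cross-equal values
lemma key_sum {α β : Type*} [DecidableEq α] [DecidableEq β] {S : Finset α} {S' : Finset β}
    {f : α → ℕ} {g : β → ℕ} (hcard : S.card = S'.card)
    (h : ∀ p ∈ S, ∀ q ∈ S', f p = g q) :
    ∑ p ∈ S, f p = ∑ q ∈ S', g q := by
  rcases S.eq_empty_or_nonempty with rfl | ⟨p0, hp0⟩
  · have : S' = ∅ := by
      apply Finset.card_eq_zero.mp; simpa using hcard.symm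
    simp [this]
  · obtain ⟨q0, hq0⟩ : S'.Nonempty := by
      rw [← Finset.card_pos, ← hcard, Finset.card_pos]; exact ⟨p0, hp0⟩
    calc ∑ p ∈ S, f p = ∑ _p ∈ S, g q0 := Finset.sum_congr rfl (fun p hp => h p hp q0 hq0)
      _ = S.card * g q0 := by simp [mul_comm]
      _ = S'.card * g q0 := by rw [hcard]
      _ = ∑ q ∈ S', g q0 := by simp [mul_comm]
      _ = ∑ q ∈ S', g q := Finset.sum_congr rfl (fun q hq => ((h p0 hp0 q0 hq0).symm.trans (h p0 hp0 q hq)))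

variable {n t : ℕ}

-- decomposition of F into fiberwise sum
noncomputable def pairSet (n : ℕ) : Finset (Fin n × Fin n) :=
  univ.filter (fun p => p.2 < p.1)

lemma F_eq_sum (n t : ℕ) (i j : Fin n) (hij : i ≠ j) :
    cnt n t (fun P => P j < P i) = ∑ p ∈ pairSet n, Ncnt n t i j p.1 p.2 := by
  unfold cnt
  rw [Finset.card_eq_sum_card_fiberwise
    (f := fun f : Fin t → Perm (Fin n) => ((List.ofFn f).prod i, (List.ofFn f).prod j))
    (t := pairSet n) (fun f hf => by
      simp only [Finset.mem_coe, mem_filter, mem_univ, true_and] at hf ⊢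
      exact mem_filter.mpr ⟨mem_univ _, hf.2⟩)]
  apply Finset.sum_congr rfl
  intro p hp
  simp only [pairSet, mem_filter, mem_univ, true_and] at hp
  unfold Ncnt cnt
  congr 1
  ext f
  simp only [mem_filter, mem_univ, true_and, Prod.ext_iff]
  constructor
  · rintro ⟨⟨hs, _⟩, h1, h2⟩; exact ⟨hs, h1, h2⟩
  · rintro ⟨hs, h1, h2⟩; exact ⟨⟨hs, by rw [h1, h2]; exact hp⟩, h1, h2⟩

noncomputable def M1 (n : ℕ) (i j : Fin n) : Finset (Fin n × Fin n) :=
  ((Iio i).image fun a => (i, a)) ∪ ((Ioi j).image fun b => (b, j))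

noncomputable def M2 (n : ℕ) (i j : Fin n) : Finset (Fin n × Fin n) :=
  (((Iio j).erase i).image fun a => (j, a)) ∪ (((Ioi i).erase j).image fun b => (b, i))

noncomputable def M3 (n : ℕ) (i j : Fin n) : Finset (Fin n × Fin n) :=
  univ.filter (fun p => p.2 < p.1 ∧ p.1 ≠ i ∧ p.1 ≠ j ∧ p.2 ≠ i ∧ p.2 ≠ j)

lemma mem_M1 {i j : Fin n} {p : Fin n × Fin n} :
    p ∈ M1 n i j ↔ (p.1 = i ∧ p.2 < i) ∨ (j < p.1 ∧ p.2 = j) := by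
  obtain ⟨b, a⟩ := p
  simp only [M1, mem_union, mem_image, mem_Iio, mem_Ioi, Prod.mk.injEq]
  constructor
  · rintro (⟨x, hx, rfl, rfl⟩ | ⟨x, hx, rfl, rfl⟩)
    · exact Or.inl ⟨rfl, hx⟩
    · exact Or.inr ⟨hx, rfl⟩
  · rintro (⟨rfl, hx⟩ | ⟨hx, rfl⟩)
    · exact Or.inl ⟨a, hx, rfl, rfl⟩
    · exact Or.inr ⟨b, hx, rfl, rfl⟩

lemma mem_M2 {i j : Fin n} {p : Fin n × Fin n} :
    p ∈ M2 n i j ↔ (p.1 = j ∧ p.2 < j ∧ p.2 ≠ i) ∨ (i < p.1 ∧ p.1 ≠ j ∧ p.2 = i) := by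
  obtain ⟨b, a⟩ := p
  simp only [M2, mem_union, mem_image, mem_erase, mem_Iio, mem_Ioi, Prod.mk.injEq]
  constructor
  · rintro (⟨x, ⟨hx1, hx2⟩, rfl, rfl⟩ | ⟨x, ⟨hx1, hx2⟩, rfl, rfl⟩)
    · exact Or.inl ⟨rfl, hx2, hx1⟩
    · exact Or.inr ⟨hx2, hx1, rfl⟩
  · rintro (⟨rfl, hx1, hx2⟩ | ⟨hx1, hx2, rfl⟩)
    · exact Or.inl ⟨a, ⟨hx2, hx1⟩, rfl, rfl⟩
    · exact Or.inr ⟨b, ⟨hx2, hx1⟩, rfl, rfl⟩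

lemma partition (n : ℕ) (i j : Fin n) (hij : i < j) :
    pairSet n = (({(j, i)} : Finset (Fin n × Fin n)) ∪ M1 n i j ∪ M2 n i j) ∪ M3 n i j := by
  ext ⟨b, a⟩
  simp only [pairSet, mem_filter, mem_univ, true_and, mem_union, mem_singleton, mem_M1, mem_M2,
    M3, Prod.mk.injEq]
  constructor
  · intro hab
    by_cases hbi : b = i
    · subst hbi
      left; left; right; left
      exact ⟨rfl, hab⟩
    · by_cases hbj : b = j
      · subst hbj
        by_cases hai : a = i
        · subst hai; left; left; left; exact ⟨rfl, rfl⟩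
        · left; right; left; exact ⟨rfl, hab, hai⟩
      · by_cases haj : a = j
        · subst haj; left; left; right; right; exact ⟨hab, rfl⟩
        · by_cases hai : a = i
          · subst hai; left; right; right; exact ⟨hab, hbj, rfl⟩
          · right; exact ⟨hab, hbi, hbj, hai, haj⟩
  · rintro (((⟨rfl, rfl⟩ | (⟨rfl, h⟩ | ⟨h, rfl⟩)) | (⟨rfl, h, _⟩ | ⟨h, _, rfl⟩)) | ⟨h, _⟩)
    · exact hij
    · exact h
    · exact h
    · exact h
    · exact h
    · exact h

lemma disj1 (n : ℕ) (i j : Fin n) (hij : i < j) :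
    Disjoint (({(j, i)} : Finset (Fin n × Fin n)) ∪ M1 n i j) (M2 n i j) := by
  rw [Finset.disjoint_left]
  rintro ⟨b, a⟩ hp hq
  simp only [mem_union, mem_singleton, mem_M1, Prod.mk.injEq] at hp
  rw [mem_M2] at hq
  rcases hq with ⟨f1, f2, f3⟩ | ⟨f1, f2, f3⟩ <;>
    rcases hp with (⟨e1, e2⟩ | (⟨e1, e2⟩ | ⟨e1, e2⟩)) <;>
    simp only [Fin.ext_iff, Fin.lt_def] at * <;> omega

lemma disj2 (n : ℕ) (i j : Fin n) (hij : i < j) :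
    Disjoint (({(j, i)} : Finset (Fin n × Fin n)) ∪ M1 n i j ∪ M2 n i j) (M3 n i j) := by
  rw [Finset.disjoint_left]
  rintro ⟨b, a⟩ hp hq
  simp only [M3, mem_filter, mem_univ, true_and] at hq
  simp only [mem_union, mem_singleton, mem_M1, mem_M2, Prod.mk.injEq] at hp
  obtain ⟨g0, g1, g2, g3, g4⟩ := hq
  rcases hp with ((⟨e1, e2⟩ | (⟨e1, e2⟩ | ⟨e1, e2⟩)) | (⟨e1, e2, e3⟩ | ⟨e1, e2, e3⟩)) <;>
    simp only [Fin.ext_iff, Fin.lt_def] at * <;> omega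

lemma disj0 (n : ℕ) (i j : Fin n) (hij : i < j) :
    Disjoint ({(j, i)} : Finset (Fin n × Fin n)) (M1 n i j) := by
  rw [Finset.disjoint_left]
  rintro ⟨b, a⟩ hp hq
  simp only [mem_singleton, Prod.mk.injEq] at hp
  rw [mem_M1] at hq
  obtain ⟨e1, e2⟩ := hp
  rcases hq with ⟨f1, f2⟩ | ⟨f1, f2⟩ <;>
    simp only [Fin.ext_iff, Fin.lt_def] at * <;> omega

lemma card_M1 (n : ℕ) (i j : Fin n) (hij : i < j) :
    (M1 n i j).card = (i : ℕ) + (n - 1 - (j : ℕ)) := by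
  unfold M1
  rw [Finset.card_union_of_disjoint, Finset.card_image_of_injective,
    Finset.card_image_of_injective, Fin.card_Iio, Fin.card_Ioi]
  · intro x y hxy; simpa using hxy
  · intro x y hxy; simpa using hxy
  · rw [Finset.disjoint_left]
    rintro ⟨b, a⟩ hp hq
    simp only [mem_image, mem_Iio, mem_Ioi, Prod.mk.injEq] at hp hq
    obtain ⟨x, hx, e1, e2⟩ := hp
    obtain ⟨y, hy, f1, f2⟩ := hq
    simp only [Fin.ext_iff, Fin.lt_def] at *
    omega

lemma card_M2 (n : ℕ) (i j : Fin n) (hij : i < j) :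
    (M2 n i j).card = ((j : ℕ) - 1) + (n - 2 - (i : ℕ)) := by
  unfold M2
  rw [Finset.card_union_of_disjoint, Finset.card_image_of_injective,
    Finset.card_image_of_injective, Finset.card_erase_of_mem (by simpa using hij),
    Finset.card_erase_of_mem (by simpa using hij), Fin.card_Iio, Fin.card_Ioi]
  · have hjn : (j : ℕ) < n := j.isLt
    omega
  · intro x y hxy; simpa using hxy
  · intro x y hxy; simpa using hxy
  · rw [Finset.disjoint_left]
    rintro ⟨b, a⟩ hp hq
    simp only [mem_image, mem_erase, mem_Iio, mem_Ioi, Prod.mk.injEq] at hp hq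
    obtain ⟨x, ⟨hx1, hx2⟩, e1, e2⟩ := hp
    obtain ⟨y, ⟨hy1, hy2⟩, f1, f2⟩ := hq
    simp only [Fin.ext_iff, Fin.lt_def] at *
    omega

lemma inj_vec2 {α : Type*} {a b : α} (h : a ≠ b) : Function.Injective ![a, b] := by
  intro m m' he
  fin_cases m <;> fin_cases m' <;> simp_all

lemma inj_vec3 {α : Type*} {a b c : α} (h1 : a ≠ b) (h2 : a ≠ c) (h3 : b ≠ c) :
    Function.Injective ![a, b, c] := by
  intro m m' he
  fin_cases m <;> fin_cases m' <;> simp_all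

lemma inj_vec4 {α : Type*} {a b c d : α} (h1 : a ≠ b) (h2 : a ≠ c) (h3 : a ≠ d)
    (h4 : b ≠ c) (h5 : b ≠ d) (h6 : c ≠ d) : Function.Injective ![a, b, c, d] := by
  intro m m' he
  fin_cases m <;> fin_cases m' <;> simp_all

lemma cross_X1 (n t : ℕ) (i j i' j' : Fin n) (hij : i ≠ j) (hij' : i' ≠ j') :
    Ncnt n t i j j i = Ncnt n t i' j' j' i' := by
  obtain ⟨σ, hσ⟩ := exists_perm_of_inj ![i', j'] ![i, j] (inj_vec2 hij') (inj_vec2 hij)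
  have h0 := hσ 0; have h1 := hσ 1
  simp only [Matrix.cons_val_zero, Matrix.cons_val_one, Matrix.head_cons] at h0 h1
  exact Ncnt_pattern n t i j j i i' j' j' i' σ h0 h1 h1 h0

lemma cross_B (n t : ℕ) (i j c i' j' c' : Fin n) (hij : i ≠ j) (hci : c ≠ i) (hcj : c ≠ j)
    (hij' : i' ≠ j') (hci' : c' ≠ i') (hcj' : c' ≠ j') :
    Ncnt n t i j i c = Ncnt n t i' j' i' c' := by
  obtain ⟨σ, hσ⟩ := exists_perm_of_inj ![i', j', c'] ![i, j, c]
    (inj_vec3 hij' hci'.symm hcj'.symm) (inj_vec3 hij hci.symm hcj.symm)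
  have h0 := hσ 0; have h1 := hσ 1; have h2 := hσ 2
  simp only [Matrix.cons_val_zero, Matrix.cons_val_one, Matrix.head_cons,
    Matrix.cons_val_two, Matrix.tail_cons] at h0 h1 h2
  exact Ncnt_pattern n t i j i c i' j' i' c' σ h0 h1 h0 h2

lemma cross_C (n t : ℕ) (i j c i' j' c' : Fin n) (hij : i ≠ j) (hci : c ≠ i) (hcj : c ≠ j)
    (hij' : i' ≠ j') (hci' : c' ≠ i') (hcj' : c' ≠ j') :
    Ncnt n t i j j c = Ncnt n t i' j' j' c' := by
  obtain ⟨σ, hσ⟩ := exists_perm_of_inj ![i', j', c'] ![i, j, c]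
    (inj_vec3 hij' hci'.symm hcj'.symm) (inj_vec3 hij hci.symm hcj.symm)
  have h0 := hσ 0; have h1 := hσ 1; have h2 := hσ 2
  simp only [Matrix.cons_val_zero, Matrix.cons_val_one, Matrix.head_cons,
    Matrix.cons_val_two, Matrix.tail_cons] at h0 h1 h2
  exact Ncnt_pattern n t i j j c i' j' j' c' σ h0 h1 h1 h2

lemma M1_norm (n t : ℕ) (i j : Fin n) (hij : i < j) (p : Fin n × Fin n) (hp : p ∈ M1 n i j) :
    ∃ c, c ≠ i ∧ c ≠ j ∧ Ncnt n t i j p.1 p.2 = Ncnt n t i j i c := by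
  rw [mem_M1] at hp
  obtain ⟨b, a⟩ := p
  rcases hp with ⟨e1, e2⟩ | ⟨e1, e2⟩
  · subst e1
    exact ⟨a, ne_of_lt e2, ne_of_lt (lt_trans e2 hij), rfl⟩
  · refine ⟨b, (ne_of_lt (lt_trans hij e1)).symm, (ne_of_lt e1).symm, ?_⟩
    show Ncnt n t i j b a = _
    rw [show a = j from e2, Ncnt_swap n t i j b j, Equiv.swap_apply_right,
      Equiv.swap_apply_of_ne_of_ne (ne_of_lt (lt_trans hij e1)).symm (ne_of_lt e1).symm]

lemma M2_norm (n t : ℕ) (i j : Fin n) (hij : i < j) (p : Fin n × Fin n) (hp : p ∈ M2 n i j) :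
    ∃ c, c ≠ i ∧ c ≠ j ∧ Ncnt n t i j p.1 p.2 = Ncnt n t i j j c := by
  rw [mem_M2] at hp
  obtain ⟨b, a⟩ := p
  rcases hp with ⟨e1, e2, e3⟩ | ⟨e1, e2, e3⟩
  · subst e1
    exact ⟨a, e3, ne_of_lt e2, rfl⟩
  · refine ⟨b, (ne_of_lt e1).symm, e2, ?_⟩
    show Ncnt n t i j b a = _
    rw [show a = i from e3, Ncnt_swap n t i j b i, Equiv.swap_apply_left,
      Equiv.swap_apply_of_ne_of_ne (ne_of_lt e1).symm e2]

lemma cross_M3 (n t : ℕ) (i j i' j' : Fin n) (hij : i < j) (hij' : i' < j')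
    (p q : Fin n × Fin n) (hp : p ∈ M3 n i j) (hq : q ∈ M3 n i' j') :
    Ncnt n t i j p.1 p.2 = Ncnt n t i' j' q.1 q.2 := by
  simp only [M3, mem_filter, mem_univ, true_and] at hp hq
  obtain ⟨hlt, h1, h2, h3, h4⟩ := hp
  obtain ⟨hlt', g1, g2, g3, g4⟩ := hq
  obtain ⟨σ, hσ⟩ := exists_perm_of_inj ![i', j', q.1, q.2] ![i, j, p.1, p.2]
    (inj_vec4 (ne_of_lt hij') g1.symm g3.symm g2.symm g4.symm (ne_of_lt hlt').symm)
    (inj_vec4 (ne_of_lt hij) h1.symm h3.symm h2.symm h4.symm (ne_of_lt hlt).symm)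
  have h0 := hσ 0; have ha := hσ 1; have hb := hσ 2; have hc := hσ 3
  simp only [Matrix.cons_val_zero, Matrix.cons_val_one, Matrix.head_cons,
    Matrix.cons_val_two, Matrix.tail_cons, Matrix.cons_val_three] at h0 ha hb hc
  exact Ncnt_pattern n t i j p.1 p.2 i' j' q.1 q.2 σ h0 ha hb hc


lemma numer_eq (n t : ℕ) (i j : Fin n) :
    (Finset.univ.filter (fun f : Fin t → Equiv.Perm (Fin n) =>
      (∀ k, (f k).IsSwap) ∧ (List.ofFn f).prod j < (List.ofFn f).prod i)).card
      = cnt n t (fun P => P j < P i) := by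
  unfold cnt
  apply congrArg Finset.card
  ext f
  simp only [mem_filter, mem_univ, true_and]

lemma F_eq (n t : ℕ) (i j i' j' : Fin n) (hij : i < j) (hij' : i' < j')
    (h : (j : ℕ) - (i : ℕ) = (j' : ℕ) - (i' : ℕ)) :
    cnt n t (fun P => P j < P i) = cnt n t (fun P => P j' < P i') := by
  have hji : (i : ℕ) < (j : ℕ) := hij
  have hji' : (i' : ℕ) < (j' : ℕ) := hij'
  have hjn : (j : ℕ) < n := j.isLt
  have hjn' : (j' : ℕ) < n := j'.isLt
  have hM1 : (M1 n i j).card = (M1 n i' j').card := by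
    rw [card_M1 n i j hij, card_M1 n i' j' hij']; omega
  have hM2 : (M2 n i j).card = (M2 n i' j').card := by
    rw [card_M2 n i j hij, card_M2 n i' j' hij']; omega
  have hM3 : (M3 n i j).card = (M3 n i' j').card := by
    have t1 := congrArg Finset.card (partition n i j hij)
    have t2 := congrArg Finset.card (partition n i' j' hij')
    rw [Finset.card_union_of_disjoint (disj2 n i j hij),
      Finset.card_union_of_disjoint (disj1 n i j hij),
      Finset.card_union_of_disjoint (disj0 n i j hij), Finset.card_singleton,
      card_M1 n i j hij, card_M2 n i j hij] at t1
    rw [Finset.card_union_of_disjoint (disj2 n i' j' hij'),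
      Finset.card_union_of_disjoint (disj1 n i' j' hij'),
      Finset.card_union_of_disjoint (disj0 n i' j' hij'), Finset.card_singleton,
      card_M1 n i' j' hij', card_M2 n i' j' hij'] at t2
    omega
  rw [F_eq_sum n t i j (ne_of_lt hij), F_eq_sum n t i' j' (ne_of_lt hij')]
  conv_lhs => rw [partition n i j hij]
  conv_rhs => rw [partition n i' j' hij']
  rw [Finset.sum_union (disj2 n i j hij), Finset.sum_union (disj1 n i j hij),
    Finset.sum_union (disj0 n i j hij)]
  rw [Finset.sum_union (disj2 n i' j' hij'), Finset.sum_union (disj1 n i' j' hij'),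
    Finset.sum_union (disj0 n i' j' hij')]
  congr 1
  congr 1
  congr 1
  · simpa using cross_X1 n t i j i' j' (ne_of_lt hij) (ne_of_lt hij')
  · apply key_sum hM1
    intro p hp q hq
    obtain ⟨c, hc1, hc2, hc3⟩ := M1_norm n t i j hij p hp
    obtain ⟨c', hc1', hc2', hc3'⟩ := M1_norm n t i' j' hij' q hq
    rw [hc3, hc3']
    exact cross_B n t i j c i' j' c' (ne_of_lt hij) hc1 hc2 (ne_of_lt hij') hc1' hc2'
  · apply key_sum hM2
    intro p hp q hq
    obtain ⟨c, hc1, hc2, hc3⟩ := M2_norm n t i j hij p hp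
    obtain ⟨c', hc1', hc2', hc3'⟩ := M2_norm n t i' j' hij' q hq
    rw [hc3, hc3']
    exact cross_C n t i j c i' j' c' (ne_of_lt hij) hc1 hc2 (ne_of_lt hij') hc1' hc2'
  · exact key_sum hM3 (fun p hp q hq => cross_M3 n t i j i' j' hij hij' p q hp hq)

/-- The probability that `(i, j)` is an inversion of a product of `t` random
transpositions depends only on the difference `j - i`. -/
theorem prob_inversion_depends_only_on_difference (n t : ℕ) (hn : 2 ≤ n)
    (i j i' j' : Fin n) (hij : i < j) (hij' : i' < j')
    (h : (j : ℕ) - (i : ℕ) = (j' : ℕ) - (i' : ℕ)) :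
    swapProbGt n t i j = swapProbGt n t i' j' := by
  unfold swapProbGt
  rw [numer_eq n t i j, numer_eq n t i' j', F_eq n t i j i' j' hij hij' h]
end

section
/- Let n ≥ 1, let ℐ_n = {(i,j) : i,j ∈ [-n,n]\{0}, |i| ≠ |j|}, and let 𝒟_n be the space of real-valued functions v on ℐ_n with v_{ji} = -v_{ij} and v_{-j,-i} = v_{ij}. Define Q on 𝒟_n by (Qv)_{ij} = ∑_{|i'| ≠ |j|} v_{i'j} + ∑_{|j'| ≠ |i|} v_{ij'}. Then Q^2 = (2n-2)Q. -/
/-- The index set `[-n, n] \ {0}` as a finset of integers. -/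
noncomputable def signedIdx (n : ℕ) : Finset ℤ := (Finset.Icc (-(n : ℤ)) n).erase 0

/-- Membership in `ℐₙ = {(i,j) : i,j ∈ [-n,n]\{0}, |i| ≠ |j|}`. -/
def memI (n : ℕ) (i j : ℤ) : Prop :=
  i ∈ signedIdx n ∧ j ∈ signedIdx n ∧ |i| ≠ |j|

/-- The operator `Q` of Lemma 5: `(Qv)_{ij} = ∑_{|i'|≠|j|} v_{i'j} + ∑_{|j'|≠|i|} v_{ij'}`,
where `i', j'` run over `[-n,n]\{0}`. -/
noncomputable def QD (n : ℕ) (v : ℤ → ℤ → ℝ) : ℤ → ℤ → ℝ := fun i j =>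
  (∑ i' ∈ (signedIdx n).filter (fun i' => |i'| ≠ |j|), v i' j)
  + ∑ j' ∈ (signedIdx n).filter (fun j' => |j'| ≠ |i|), v i j'

lemma mem_signedIdx {n : ℕ} {a : ℤ} :
    a ∈ signedIdx n ↔ a ≠ 0 ∧ -(n : ℤ) ≤ a ∧ a ≤ n := by
  simp [signedIdx, Finset.mem_erase, Finset.mem_Icc, and_assoc]

lemma neg_mem_signedIdx {n : ℕ} {a : ℤ} (h : a ∈ signedIdx n) : -a ∈ signedIdx n := by
  rw [mem_signedIdx] at *; omega

lemma sum_neg_reindex {s : Finset ℤ} (hs : ∀ a ∈ s, -a ∈ s) (f : ℤ → ℝ) :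
    ∑ a ∈ s, f (-a) = ∑ a ∈ s, f a := by
  refine Finset.sum_nbij' (fun a => -a) (fun a => -a) hs hs ?_ ?_ ?_
  · intro a _; ring
  · intro a _; ring
  · intro a _; simp

lemma card_signedIdx (n : ℕ) : (signedIdx n).card = 2 * n := by
  have h0 : (0 : ℤ) ∈ Finset.Icc (-(n : ℤ)) n := by
    simp
  rw [signedIdx, Finset.card_erase_of_mem h0, Int.card_Icc]
  omega

lemma card_filter_abs {n : ℕ} {k : ℤ} (hk : k ∈ signedIdx n) :
    (((signedIdx n).filter (fun x => |x| ≠ |k|)).card) = 2 * n - 2 := by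
  have hk' : k ≠ 0 := (mem_signedIdx.mp hk).1
  have heq : (signedIdx n).filter (fun x => |x| ≠ |k|) = signedIdx n \ {k, -k} := by
    ext a
    simp only [Finset.mem_filter, Finset.mem_sdiff, Finset.mem_insert, Finset.mem_singleton]
    constructor
    · rintro ⟨ha, h2⟩
      refine ⟨ha, ?_⟩
      rintro (rfl | rfl) <;> simp_all [abs_neg]
    · rintro ⟨ha, h2⟩
      refine ⟨ha, fun h => h2 ?_⟩
      rcases abs_eq_abs.mp h with rfl | rfl
      · exact Or.inl rfl
      · exact Or.inr (by ring)
  rw [heq, Finset.card_sdiff_of_subset]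
  · rw [card_signedIdx]
    have : ({k, -k} : Finset ℤ).card = 2 := by
      rw [Finset.card_insert_of_notMem (by simp; omega), Finset.card_singleton]
    omega
  · intro a ha
    simp only [Finset.mem_insert, Finset.mem_singleton] at ha
    rcases ha with rfl | rfl
    · exact hk
    · exact neg_mem_signedIdx hk

theorem QD_sq (n : ℕ) (hn : 1 ≤ n) (v : ℤ → ℤ → ℝ)
    (hanti : ∀ i j, memI n i j → v j i = -v i j)
    (hsym : ∀ i j, memI n i j → v (-j) (-i) = v i j) :
    ∀ i j, memI n i j → QD n (QD n v) i j = (2 * (n : ℝ) - 2) * QD n v i j := by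
  intro i j hij
  obtain ⟨hi, hj, _⟩ := hij
  set G : ℤ → Finset ℤ := fun k => (signedIdx n).filter (fun x => |x| ≠ |k|) with hG
  have hGmem : ∀ {k a : ℤ}, a ∈ G k → a ∈ signedIdx n ∧ |a| ≠ |k| := by
    intro k a ha; exact Finset.mem_filter.mp ha
  have hGneg : ∀ (k : ℤ), ∀ a ∈ G k, -a ∈ G k := by
    intro k a ha
    obtain ⟨h1, h2⟩ := hGmem ha
    exact Finset.mem_filter.mpr ⟨neg_mem_signedIdx h1, by rwa [abs_neg]⟩
  have hGabs : ∀ k : ℤ, G (-k) = G k := by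
    intro k; simp [hG, abs_neg]
  set R : ℤ → ℝ := fun k => ∑ a ∈ G k, v a k with hR
  set C : ℤ → ℝ := fun k => ∑ b ∈ G k, v k b with hC
  -- antisymmetry on pairs
  have hmemI : ∀ {k a : ℤ}, k ∈ signedIdx n → a ∈ G k → memI n a k := by
    intro k a hk ha
    obtain ⟨h1, h2⟩ := hGmem ha
    exact ⟨h1, hk, h2⟩
  have hCneg : ∀ k ∈ signedIdx n, C (-k) = -C k := by
    intro k hk
    have : C (-k) = ∑ b ∈ G k, v (-k) (-b) := by
      rw [hC]
      simp only
      rw [hGabs k]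
      exact (sum_neg_reindex (hGneg k) (fun b => v (-k) b)).symm
    rw [this, hC]
    simp only
    rw [← Finset.sum_neg_distrib]
    refine Finset.sum_congr rfl ?_
    intro b hb
    have hm : memI n b k := hmemI hk hb
    have hm' : memI n k b := ⟨hm.2.1, hm.1, fun h => hm.2.2 h.symm⟩
    rw [hsym b k hm, hanti k b hm']
  have hRneg : ∀ k ∈ signedIdx n, R (-k) = -R k := by
    intro k hk
    have : R (-k) = ∑ a ∈ G k, v (-a) (-k) := by
      rw [hR]
      simp only
      rw [hGabs k]
      exact (sum_neg_reindex (hGneg k) (fun a => v a (-k))).symm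
    rw [this, hR]
    simp only
    rw [← Finset.sum_neg_distrib]
    refine Finset.sum_congr rfl ?_
    intro a ha
    have hm : memI n a k := hmemI hk ha
    have hm' : memI n k a := ⟨hm.2.1, hm.1, fun h => hm.2.2 h.symm⟩
    rw [hsym k a hm', hanti a k hm]
  have hCsum : ∀ k ∈ signedIdx n, ∑ a ∈ G k, C a = 0 := by
    intro k hk
    refine Finset.sum_involution (fun a _ => -a) ?_ ?_ (fun a ha => hGneg k a ha) ?_
    · intro a ha
      have := hCneg a (hGmem ha).1
      rw [this]; ring
    · intro a ha _
      have : a ≠ 0 := (mem_signedIdx.mp (hGmem ha).1).1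
      show -a ≠ a
      omega
    · intro a _; ring
  have hRsum : ∀ k ∈ signedIdx n, ∑ b ∈ G k, R b = 0 := by
    intro k hk
    refine Finset.sum_involution (fun a _ => -a) ?_ ?_ (fun a ha => hGneg k a ha) ?_
    · intro a ha
      have := hRneg a (hGmem ha).1
      rw [this]; ring
    · intro a ha _
      have : a ≠ 0 := (mem_signedIdx.mp (hGmem ha).1).1
      show -a ≠ a
      omega
    · intro a _; ring
  have hcardj : ((G j).card : ℝ) = 2 * n - 2 := by
    rw [hG]; simp only
    rw [card_filter_abs hj]
    push_cast [Nat.cast_sub (by omega : 2 ≤ 2 * n)]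
    ring
  have hcardi : ((G i).card : ℝ) = 2 * n - 2 := by
    rw [hG]; simp only
    rw [card_filter_abs hi]
    push_cast [Nat.cast_sub (by omega : 2 ≤ 2 * n)]
    ring
  have hQ : ∀ a b : ℤ, QD n v a b = R b + C a := fun a b => rfl
  have expand : QD n (QD n v) i j = (∑ a ∈ G j, (R j + C a)) + ∑ b ∈ G i, (R b + C i) := by
    rw [show QD n (QD n v) i j = (∑ a ∈ G j, QD n v a j) + ∑ b ∈ G i, QD n v i b from rfl]
    simp only [hQ]
  rw [expand, Finset.sum_add_distrib, Finset.sum_add_distrib, Finset.sum_const,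
    Finset.sum_const, hCsum j hj, hRsum i hi, hQ, nsmul_eq_mul, nsmul_eq_mul,
    hcardj, hcardi]
  ring
end
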